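/- arXiv:2309.10303 — 7 statements merged into one kernel-verified Lean document; each statement's English description precedes it below -/
import Mathlib

section
/- Let r ≥ 1 be an integer and let u, v ∈ ℤ[X] satisfy r·v(X) = u(rX) (such an integer polynomial v of the same degree as u exists precisely when r divides u(0)). Then r·v^{(n)}(1) = u^{(n)}(r) for all n ≥ 1. Consequently, for any finite set A of primes, u is weakly locally nilpotent at r outside A if and only if v is weakly locally nilpotent at 1 outside A ∪ {p prime : p divides r}; and u is nilpotent at r if and only if v is nilpotent at 1. -/
open Polynomial

/-- The `n`-th compositional iterate of the polynomial `u`, evaluated at `r`. -/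
def iterEval (u : Polynomial ℤ) (n : ℕ) (r : ℤ) : ℤ :=
  (fun x => Polynomial.eval x u)^[n] r

/-- `u` is weakly locally nilpotent at `r` outside `A`: for every prime `p ∉ A`
there is `m ≥ 1` with `p ∣ u^{(m)}(r)`. -/
def WeaklyLocallyNilpotentAt (u : Polynomial ℤ) (r : ℤ) (A : Set ℕ) : Prop :=
  ∀ p : ℕ, Nat.Prime p → p ∉ A → ∃ m : ℕ, 1 ≤ m ∧ (p : ℤ) ∣ iterEval u m r

/-- `u` is locally nilpotent at `r`: for every prime `p` there is `m ≥ 1`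
with `p ∣ u^{(m)}(r)`. -/
def LocallyNilpotentAt (u : Polynomial ℤ) (r : ℤ) : Prop :=
  ∀ p : ℕ, Nat.Prime p → ∃ m : ℕ, 1 ≤ m ∧ (p : ℤ) ∣ iterEval u m r

/-- `u` is nilpotent at `r`: some iterate `u^{(n)}(r)` (with `n ≥ 1`) equals `0`. -/
def IsNilpotentAt (u : Polynomial ℤ) (r : ℤ) : Prop :=
  ∃ n : ℕ, 1 ≤ n ∧ iterEval u n r = 0

/-- `u` is nilpotent at `r` with nilpotency index exactly `i`. -/
def NilpotentOfIndex (u : Polynomial ℤ) (r : ℤ) (i : ℕ) : Prop :=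
  1 ≤ i ∧ iterEval u i r = 0 ∧ ∀ m : ℕ, 1 ≤ m → m < i → iterEval u m r ≠ 0

theorem reduction_of_polynomials (r : ℤ) (hr : 1 ≤ r) (u v : Polynomial ℤ)
    (h : Polynomial.C r * v = u.comp (Polynomial.C r * Polynomial.X)) :
    (∀ n : ℕ, 1 ≤ n → r * iterEval v n 1 = iterEval u n r) ∧
    (∀ A : Set ℕ, A.Finite → (∀ p ∈ A, Nat.Prime p) →
      (WeaklyLocallyNilpotentAt u r A ↔
        WeaklyLocallyNilpotentAt v 1 (A ∪ {p : ℕ | (p : ℤ) ∣ r}))) ∧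
    (IsNilpotentAt u r ↔ IsNilpotentAt v 1) := by
  have key : ∀ x : ℤ, r * v.eval x = u.eval (r * x) := by
    intro x
    have := congrArg (Polynomial.eval x) h
    simpa using this
  have main : ∀ n : ℕ, 1 ≤ n → r * iterEval v n 1 = iterEval u n r := by
    intro n hn
    induction n with
    | zero => omega
    | succ k ih =>
      rcases Nat.eq_zero_or_pos k with hk | hk
      · subst hk
        simp only [iterEval, Function.iterate_one]
        simpa using key 1
      · have ih' := ih hk
        simp only [iterEval, Function.iterate_succ_apply'] at ih' ⊢
        rw [key ((fun x => Polynomial.eval x v)^[k] 1), ih']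
  have hr0 : r ≠ 0 := by omega
  refine ⟨main, ?_, ?_⟩
  · intro A _ _
    constructor
    · intro hu p hp hpA
      simp only [Set.mem_union, Set.mem_setOf_eq, not_or] at hpA
      obtain ⟨m, hm, hdvd⟩ := hu p hp hpA.1
      refine ⟨m, hm, ?_⟩
      rw [← main m hm] at hdvd
      exact (Int.Prime.dvd_mul' hp hdvd).resolve_left hpA.2
    · intro hv p hp hpA
      by_cases hpr : (p : ℤ) ∣ r
      · exact ⟨1, le_refl 1, by rw [← main 1 le_rfl]; exact hpr.mul_right _⟩
      · obtain ⟨m, hm, hdvd⟩ := hv p hp (by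
          simp only [Set.mem_union, Set.mem_setOf_eq, not_or]; exact ⟨hpA, hpr⟩)
        exact ⟨m, hm, by rw [← main m hm]; exact hdvd.mul_left _⟩
  · constructor
    · rintro ⟨n, hn, h0⟩
      refine ⟨n, hn, ?_⟩
      have := main n hn
      rw [h0] at this
      exact (mul_eq_zero.mp this).resolve_left hr0
    · rintro ⟨n, hn, h0⟩
      exact ⟨n, hn, by rw [← main n hn, h0, mul_zero]⟩
end

section
/- Let u ∈ ℤ[X] be nonconstant. Then u is locally nilpotent at 1 if and only if u has one of the following forms: (1) u(X) = (X−1)·p(X) for some nonzero p ∈ ℤ[X]; (2) u(X) = −2X + 4 + p(X)·(X−1)(X−2) for some p ∈ ℤ[X]; (3) u(X) = −2X² + 7X − 3 + p(X)·(X−1)(X−2)(X−3) for some p ∈ ℤ[X]; (4) u(X) = X + 1. Moreover, polynomials of forms (1), (2), (3) are nilpotent at 1 of nilpotency index 1, 2, 3 respectively, while X + 1 is not nilpotent at 1. -/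
open Polynomial

private lemma iterEval_zero (u : ℤ[X]) (r : ℤ) : iterEval u 0 r = r := rfl

private lemma iterEval_succ (u : ℤ[X]) (n : ℕ) (r : ℤ) :
    iterEval u (n+1) r = u.eval (iterEval u n r) := Function.iterate_succ_apply' _ _ _

private lemma no_prime_pm_one {z : ℤ} (h : ∀ p : ℕ, p.Prime → ¬ (p:ℤ) ∣ z) : z = 1 ∨ z = -1 := by
  rcases eq_or_ne z 0 with rfl | hz
  · exact absurd (dvd_zero 2) (h 2 Nat.prime_two)
  · have h1 : z.natAbs = 1 := by
      by_contra hne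
      obtain ⟨p, hp, hpd⟩ := Nat.exists_prime_and_dvd hne
      exact h p hp (Int.dvd_natAbs.mp (Int.natCast_dvd_natCast.mpr hpd))
    rcases Int.natAbs_eq_iff.mp h1 with he | he
    · exact Or.inl he
    · exact Or.inr he

private lemma iter_sub_dvd (u : ℤ[X]) (g j : ℕ) :
    (iterEval u (j+g) 1 - iterEval u j 1) ∣ (iterEval u (j+1+g) 1 - iterEval u (j+1) 1) := by
  have e : j+1+g = (j+g)+1 := by omega
  rw [e, iterEval_succ, iterEval_succ]
  exact Polynomial.sub_dvd_eval_sub _ _ u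

private lemma iter_sub_dvd_le (u : ℤ[X]) (g : ℕ) {j j' : ℕ} (h : j ≤ j') :
    (iterEval u (j+g) 1 - iterEval u j 1) ∣ (iterEval u (j'+g) 1 - iterEval u j' 1) := by
  induction j', h using Nat.le_induction with
  | base => exact dvd_refl _
  | succ n hn ih => exact ih.trans (iter_sub_dvd u g n)

private lemma reduce_dvd (u : ℤ[X]) {p : ℕ} (g j0 : ℕ) (hg : 1 ≤ g)
    (hdvd : (p:ℤ) ∣ iterEval u (j0+g) 1 - iterEval u j0 1) :
    ∀ m : ℕ, (p:ℤ) ∣ iterEval u m 1 → ∃ m' : ℕ, m' < j0 + g ∧ (p:ℤ) ∣ iterEval u m' 1 := by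
  intro m
  induction m using Nat.strong_induction_on with
  | _ m ih =>
    intro hm
    by_cases hlt : m < j0 + g
    · exact ⟨m, hlt, hm⟩
    · have hj : j0 ≤ m - g := by omega
      have h2 := hdvd.trans (iter_sub_dvd_le u g hj)
      have e : m - g + g = m := by omega
      rw [e] at h2
      have h3 : (p:ℤ) ∣ iterEval u (m-g) 1 := by
        have := hm.sub h2
        rwa [sub_sub_cancel] at this
      exact ih (m-g) (by omega) h3

private lemma reduce_dvd' (u : ℤ[X]) {p : ℕ} (g j0 K : ℕ) (hg : 1 ≤ g) (hK : j0 + g = K)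
    (hdvd : (p:ℤ) ∣ iterEval u K 1 - iterEval u j0 1) (m : ℕ) (hm : (p:ℤ) ∣ iterEval u m 1) :
    ∃ m' : ℕ, m' < K ∧ (p:ℤ) ∣ iterEval u m' 1 := by
  subst hK; exact reduce_dvd u g j0 hg hdvd m hm

private lemma orbit_eq (u : ℤ[X]) (hLN : LocallyNilpotentAt u 1)
    (h1 : iterEval u 1 1 ≠ 0) (h2 : iterEval u 2 1 ≠ 0) (h3 : iterEval u 3 1 ≠ 0) :
    ∀ k : ℕ, iterEval u k 1 = k + 1 := by
  intro k
  induction k using Nat.strong_induction_on with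
  | _ k ih =>
  rcases Nat.lt_or_ge k 4 with hk | hk
  · interval_cases k
    · simp [iterEval_zero]
    · -- k = 1
      have key : ∀ p : ℕ, p.Prime → ¬ (p:ℤ) ∣ (iterEval u 1 1 - 1) := by
        intro p hp hpd
        obtain ⟨m, hm1, hmd⟩ := hLN p hp
        have hpd' : (p:ℤ) ∣ iterEval u 1 1 - iterEval u 0 1 := by
          rw [iterEval_zero]; exact hpd
        obtain ⟨m', hm', hd'⟩ := reduce_dvd' u 1 0 1 le_rfl rfl hpd' m hmd
        have hm0 : m' = 0 := by omega
        subst hm0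
        rw [iterEval_zero] at hd'
        have := Int.le_of_dvd one_pos hd'
        have := hp.two_le
        omega
      rcases no_prime_pm_one key with he | he
      · push_cast; omega
      · exfalso; apply h1; omega
    · -- k = 2
      have ha1 : iterEval u 1 1 = 2 := by
        have := ih 1 (by omega); push_cast at this; omega
      have e1 : ∀ p : ℕ, p.Prime → (p:ℤ) ∣ (iterEval u 2 1 - 2) → p = 2 := by
        intro p hp hpd
        obtain ⟨m, hm1, hmd⟩ := hLN p hp
        have hpd' : (p:ℤ) ∣ iterEval u 2 1 - iterEval u 1 1 := by rw [ha1]; exact hpd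
        obtain ⟨m', hm', hd'⟩ := reduce_dvd' u 1 1 2 le_rfl rfl hpd' m hmd
        interval_cases m'
        · rw [iterEval_zero] at hd'
          have := Int.le_of_dvd one_pos hd'
          have := hp.two_le; omega
        · rw [ha1] at hd'
          have := Int.le_of_dvd (by norm_num) hd'
          have := hp.two_le; omega
      have e2 : ∀ p : ℕ, p.Prime → (p:ℤ) ∣ (iterEval u 2 1 - 1) → p = 2 := by
        intro p hp hpd
        obtain ⟨m, hm1, hmd⟩ := hLN p hp
        have hpd' : (p:ℤ) ∣ iterEval u 2 1 - iterEval u 0 1 := by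
          rw [iterEval_zero]; exact hpd
        obtain ⟨m', hm', hd'⟩ := reduce_dvd' u 2 0 2 (by omega) rfl hpd' m hmd
        interval_cases m'
        · rw [iterEval_zero] at hd'
          have := Int.le_of_dvd one_pos hd'
          have := hp.two_le; omega
        · rw [ha1] at hd'
          have := Int.le_of_dvd (by norm_num) hd'
          have := hp.two_le; omega
      by_cases h2d : (2:ℤ) ∣ (iterEval u 2 1 - 2)
      · have key : ∀ p : ℕ, p.Prime → ¬ (p:ℤ) ∣ (iterEval u 2 1 - 1) := by
          intro p hp hpd
          have hp2 := e2 p hp hpd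
          subst hp2
          omega
        rcases no_prime_pm_one key with he | he
        · -- a2 = 2 : then a2 - 2 = 0 and 3 ∣ 0
          exfalso
          have h30 : (3:ℤ) ∣ (iterEval u 2 1 - 2) := by
            have : iterEval u 2 1 - 2 = 0 := by omega
            rw [this]; exact dvd_zero 3
          have := e1 3 (by norm_num) h30
          omega
        · exfalso; apply h2; omega
      · have key : ∀ p : ℕ, p.Prime → ¬ (p:ℤ) ∣ (iterEval u 2 1 - 2) := by
          intro p hp hpd
          have hp2 := e1 p hp hpd
          subst hp2
          exact h2d hpd
        rcases no_prime_pm_one key with he | he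
        · push_cast; omega
        · -- a2 = 1: then a2 - 1 = 0, 3 ∣ 0
          exfalso
          have h30 : (3:ℤ) ∣ (iterEval u 2 1 - 1) := by
            have : iterEval u 2 1 - 1 = 0 := by omega
            rw [this]; exact dvd_zero 3
          have := e2 3 (by norm_num) h30
          omega
    · -- k = 3
      have ha1 : iterEval u 1 1 = 2 := by
        have := ih 1 (by omega); push_cast at this; omega
      have ha2 : iterEval u 2 1 = 3 := by
        have := ih 2 (by omega); push_cast at this; omega
      have small : ∀ p : ℕ, p.Prime → (∃ m' : ℕ, m' < 3 ∧ (p:ℤ) ∣ iterEval u m' 1) →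
          p = 2 ∨ p = 3 := by
        intro p hp ⟨m', hm', hd'⟩
        interval_cases m'
        · rw [iterEval_zero] at hd'
          have := Int.le_of_dvd one_pos hd'
          have := hp.two_le; omega
        · rw [ha1] at hd'
          have := Int.le_of_dvd (by norm_num) hd'
          have := hp.two_le; omega
        · rw [ha2] at hd'
          have := Int.le_of_dvd (by norm_num) hd'
          have := hp.two_le; omega
      have f1 : ∀ p : ℕ, p.Prime → (p:ℤ) ∣ (iterEval u 3 1 - 3) → p = 2 ∨ p = 3 := by
        intro p hp hpd
        obtain ⟨m, hm1, hmd⟩ := hLN p hp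
        refine small p hp (reduce_dvd' u 1 2 3 le_rfl rfl ?_ m hmd)
        rw [ha2]; exact hpd
      have f2 : ∀ p : ℕ, p.Prime → (p:ℤ) ∣ (iterEval u 3 1 - 2) → p = 2 ∨ p = 3 := by
        intro p hp hpd
        obtain ⟨m, hm1, hmd⟩ := hLN p hp
        refine small p hp (reduce_dvd' u 2 1 3 (by omega) rfl ?_ m hmd)
        rw [ha1]; exact hpd
      have f3 : ∀ p : ℕ, p.Prime → (p:ℤ) ∣ (iterEval u 3 1 - 1) → p = 2 ∨ p = 3 := by
        intro p hp hpd
        obtain ⟨m, hm1, hmd⟩ := hLN p hp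
        refine small p hp (reduce_dvd' u 3 0 3 (by omega) rfl ?_ m hmd)
        rw [iterEval_zero]; exact hpd
      have f4 : (2:ℤ) ∣ (iterEval u 3 1 - 2) := by
        have hd := iter_sub_dvd u 2 0
        norm_num [iterEval_zero] at hd
        rw [ha1, ha2] at hd
        exact (by norm_num : (2:ℤ) ∣ 3 - 1).trans hd
      by_cases h3d : (3:ℤ) ∣ (iterEval u 3 1 - 1)
      · have key : ∀ p : ℕ, p.Prime → ¬ (p:ℤ) ∣ (iterEval u 3 1 - 3) := by
          intro p hp hpd
          rcases f1 p hp hpd with rfl | rfl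
          · omega
          · omega
        rcases no_prime_pm_one key with he | he
        · push_cast; omega
        · -- a3 = 2: a3 - 2 = 0, 5 ∣ 0
          exfalso
          have h50 : (5:ℤ) ∣ (iterEval u 3 1 - 2) := by
            have : iterEval u 3 1 - 2 = 0 := by omega
            rw [this]; exact dvd_zero 5
          rcases f2 5 (by norm_num) h50 with h | h <;> omega
      · have key : ∀ p : ℕ, p.Prime → ¬ (p:ℤ) ∣ (iterEval u 3 1 - 1) := by
          intro p hp hpd
          rcases f3 p hp hpd with rfl | rfl
          · omega
          · exact h3d hpd
        rcases no_prime_pm_one key with he | he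
        · -- a3 = 2 again
          exfalso
          have h50 : (5:ℤ) ∣ (iterEval u 3 1 - 2) := by
            have : iterEval u 3 1 - 2 = 0 := by omega
            rw [this]; exact dvd_zero 5
          rcases f2 5 (by norm_num) h50 with h | h <;> omega
        · exfalso; apply h3; omega
  · -- step: 4 ≤ k
    have hA : ∀ g : ℕ, 1 ≤ g → g ≤ k - 1 → (g:ℤ) ∣ (iterEval u k 1 - ((k:ℤ)+1)) := by
      intro g hg1 hg2
      have hd := iter_sub_dvd u g (k-1-g)
      have e1 : k-1-g+g = k-1 := by omega
      have e2 : k-1-g+1+g = k := by omega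
      have e3 : k-1-g+1 = k-g := by omega
      rw [e1, e2, e3, ih (k-1) (by omega), ih (k-1-g) (by omega), ih (k-g) (by omega)] at hd
      have e4 : ((k-1:ℕ):ℤ)+1 - (((k-1-g:ℕ):ℤ)+1) = (g:ℤ) := by omega
      rw [e4] at hd
      have e5 : iterEval u k 1 - (((k-g:ℕ):ℤ)+1) = (iterEval u k 1 - ((k:ℤ)+1)) + g := by
        have : ((k-g:ℕ):ℤ) = (k:ℤ) - g := by omega
        rw [this]; ring
      rw [e5] at hd
      have := hd.sub (dvd_refl (g:ℤ))
      simpa using this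
    have hB : ∀ i : ℕ, 1 ≤ i → i ≤ k → ∀ p : ℕ, p.Prime →
        (p:ℤ) ∣ (iterEval u k 1 - (i:ℤ)) → ∃ t : ℕ, 2 ≤ t ∧ t ≤ k ∧ p ∣ t := by
      intro i hi1 hik p hp hpd
      have hdvd : (p:ℤ) ∣ iterEval u k 1 - iterEval u (i-1) 1 := by
        rw [ih (i-1) (by omega)]
        have e : ((i-1:ℕ):ℤ) + 1 = (i:ℤ) := by omega
        rw [e]; exact hpd
      obtain ⟨m, hm1, hmd⟩ := hLN p hp
      obtain ⟨m', hm', hd'⟩ := reduce_dvd' u (k-i+1) (i-1) k (by omega) (by omega) hdvd m hmd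
      rcases Nat.eq_zero_or_pos m' with rfl | hm'pos
      · rw [iterEval_zero] at hd'
        have := Int.le_of_dvd one_pos hd'
        have := hp.two_le; exfalso; omega
      · refine ⟨m'+1, by omega, by omega, ?_⟩
        rw [ih m' (by omega)] at hd'
        have e : ((m':ℕ):ℤ) + 1 = ((m'+1:ℕ):ℤ) := by push_cast; ring
        rw [e] at hd'
        exact Int.natCast_dvd_natCast.mp hd'
    have hz1 : ∀ p : ℕ, p.Prime → (p:ℤ) ∣ (iterEval u k 1 - (k:ℤ)) → p = k := by
      intro p hp hpd
      obtain ⟨t, ht2, htk, hpt⟩ := hB k (by omega) le_rfl p hp hpd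
      have hpk : p ≤ k := le_trans (Nat.le_of_dvd (by omega) hpt) htk
      by_contra hne
      have h1 := hA p (hp.two_le.trans' (by omega)) (by omega)
      have e : iterEval u k 1 - (k:ℤ) = (iterEval u k 1 - ((k:ℤ)+1)) + 1 := by ring
      rw [e] at hpd
      have h2 : (p:ℤ) ∣ 1 := (dvd_add_right h1).mp hpd
      have := Int.le_of_dvd one_pos h2
      have := hp.two_le
      omega
    by_cases hc : (Nat.Prime k) ∧ ((k:ℕ):ℤ) ∣ (iterEval u k 1 - (k:ℤ))
    · obtain ⟨hkp, hkd⟩ := hc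
      exfalso
      have hk5 : 5 ≤ k := by
        by_contra h
        have : k = 4 := by omega
        rw [this] at hkp
        norm_num at hkp
      have hz2 : ∀ p : ℕ, p.Prime → (p:ℤ) ∣ (iterEval u k 1 - ((k:ℤ)-1)) → p = 2 := by
        intro p hp hpd
        obtain ⟨t, ht2, htk, hpt⟩ := hB (k-1) (by omega) (by omega) p hp (by
          have e : ((k-1:ℕ):ℤ) = (k:ℤ)-1 := by omega
          rw [e]; exact hpd)
        have hpk : p ≤ k := le_trans (Nat.le_of_dvd (by omega) hpt) htk
        by_cases hpe : p = k
        · exfalso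
          have hkd' : (p:ℤ) ∣ (iterEval u k 1 - (k:ℤ)) := by rw [hpe]; exact hkd
          have hd1 : (p:ℤ) ∣ 1 := by
            have := hpd.sub hkd'
            have e : iterEval u k 1 - ((k:ℤ)-1) - (iterEval u k 1 - (k:ℤ)) = 1 := by ring
            rwa [e] at this
          have := Int.le_of_dvd one_pos hd1
          have := hp.two_le
          omega
        · have h1 := hA p (hp.two_le.trans' (by omega)) (by omega)
          have e : iterEval u k 1 - ((k:ℤ)-1) = (iterEval u k 1 - ((k:ℤ)+1)) + 2 := by ring
          rw [e] at hpd
          have h2 : (p:ℤ) ∣ 2 := (dvd_add_right h1).mp hpd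
          have := Int.le_of_dvd (by norm_num) h2
          have := hp.two_le
          omega
      have h4 : (4:ℤ) ∣ (iterEval u k 1 - ((k:ℤ)+1)) := hA 4 (by omega) (by omega)
      have h3' : (3:ℤ) ∣ (iterEval u k 1 - ((k:ℤ)+1)) := hA 3 (by omega) (by omega)
      obtain ⟨c, hc4⟩ := h4
      have keyw : ∀ p : ℕ, p.Prime → ¬ (p:ℤ) ∣ (2*c+1) := by
        intro p hp hpd
        have hz2d : (p:ℤ) ∣ (iterEval u k 1 - ((k:ℤ)-1)) := by
          have e : iterEval u k 1 - ((k:ℤ)-1) = 2*(2*c+1) := by omega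
          rw [e]
          exact hpd.mul_left 2
        have hp2 := hz2 p hp hz2d
        subst hp2
        omega
      rcases no_prime_pm_one keyw with he | he
      · -- c = 0: y = 0, z1 = 1, k ∣ 1
        have e : iterEval u k 1 - (k:ℤ) = 1 := by omega
        rw [e] at hkd
        have := Int.le_of_dvd one_pos hkd
        omega
      · -- c = -1: y = -4, 3 ∣ -4
        have e : iterEval u k 1 - ((k:ℤ)+1) = -4 := by omega
        rw [e] at h3'
        norm_num at h3'
    · have key : ∀ p : ℕ, p.Prime → ¬ (p:ℤ) ∣ (iterEval u k 1 - (k:ℤ)) := by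
        intro p hp hpd
        have hpk := hz1 p hp hpd
        exact hc ⟨hpk ▸ hp, hpk ▸ hpd⟩
      rcases no_prime_pm_one key with he | he
      · omega
      · exfalso
        have h3' := hA 3 (by omega) (by omega)
        have e : iterEval u k 1 - ((k:ℤ)+1) = -2 := by omega
        rw [e] at h3'
        norm_num at h3'

private lemma iterEval_one' (u : ℤ[X]) (r : ℤ) : iterEval u 1 r = u.eval r := by
  rw [iterEval_succ, iterEval_zero]

private lemma iterEval_two' (u : ℤ[X]) (r : ℤ) : iterEval u 2 r = u.eval (u.eval r) := by
  rw [show (2:ℕ) = 1+1 from rfl, iterEval_succ, iterEval_one']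

private lemma iterEval_three' (u : ℤ[X]) (r : ℤ) : iterEval u 3 r = u.eval (u.eval (u.eval r)) := by
  rw [show (3:ℕ) = 2+1 from rfl, iterEval_succ, iterEval_two']

private lemma eq_X_add_one (u : ℤ[X]) (hLN : LocallyNilpotentAt u 1)
    (h1 : iterEval u 1 1 ≠ 0) (h2 : iterEval u 2 1 ≠ 0) (h3 : iterEval u 3 1 ≠ 0) :
    u = X + 1 := by
  have horb := orbit_eq u hLN h1 h2 h3
  have heval : ∀ n : ℕ, u.eval ((n:ℤ)+1) = (n:ℤ)+2 := by
    intro n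
    have hs := iterEval_succ u n 1
    rw [horb n, horb (n+1)] at hs
    push_cast at hs
    linarith
  have hzero : u - (X + 1) = 0 := by
    apply Polynomial.eq_zero_of_infinite_isRoot
    apply Set.infinite_of_injective_forall_mem (f := fun n : ℕ => (n:ℤ)+1)
    · intro a b hab
      simpa using hab
    · intro n
      simp only [Set.mem_setOf_eq, Polynomial.IsRoot, Polynomial.eval_sub,
        Polynomial.eval_add, Polynomial.eval_X, Polynomial.eval_one, heval n]
      ring
  have := sub_eq_zero.mp hzero
  exact this

private lemma iter_X1 (n : ℕ) : iterEval (X + 1 : ℤ[X]) n 1 = n + 1 := by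
  induction n with
  | zero => simp [iterEval_zero]
  | succ n ih =>
    rw [iterEval_succ, ih]
    simp only [Polynomial.eval_add, Polynomial.eval_X, Polynomial.eval_one]
    push_cast
    ring

private lemma forward (u : ℤ[X]) (hu : 0 < u.natDegree) (hLN : LocallyNilpotentAt u 1) :
    ((∃ p : Polynomial ℤ, p ≠ 0 ∧ u = (X - 1) * p) ∨
      (∃ p : Polynomial ℤ, u = -2 * X + 4 + p * (X - 1) * (X - 2)) ∨
      (∃ p : Polynomial ℤ, u = -2 * X ^ 2 + 7 * X - 3 + p * (X - 1) * (X - 2) * (X - 3)) ∨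
      u = X + 1) := by
  by_cases h1 : iterEval u 1 1 = 0
  · left
    have hroot : u.IsRoot 1 := by rwa [iterEval_one'] at h1
    obtain ⟨p, hp⟩ := Polynomial.dvd_iff_isRoot.mpr hroot
    refine ⟨p, ?_, by rwa [Polynomial.C_1] at hp⟩
    rintro rfl
    rw [mul_zero] at hp
    rw [hp] at hu
    simp at hu
  by_cases h2 : iterEval u 2 1 = 0
  · right; left
    have e1 : iterEval u 1 1 = u.eval 1 := iterEval_one' u 1
    have e2 : iterEval u 2 1 = u.eval (iterEval u 1 1) := iterEval_succ u 1 1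
    have hd : (1 - iterEval u 1 1) ∣ iterEval u 1 1 := by
      have h := Polynomial.sub_dvd_eval_sub 1 (iterEval u 1 1) u
      rw [← e1, ← e2, h2, sub_zero] at h
      exact h
    have hone : (1 - iterEval u 1 1) ∣ 1 := by
      have := dvd_add (dvd_refl (1 - iterEval u 1 1)) hd
      simpa using this
    have ha : iterEval u 1 1 = 2 := by
      rcases Int.isUnit_iff.mp (isUnit_of_dvd_one hone) with h | h <;> omega
    have hA1 : u.eval 1 = 2 := by rw [← e1]; exact ha
    have hA2 : u.eval 2 = 0 := by rw [← h2, e2, ha]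
    have hw1 : (u - (-2*X + 4)).IsRoot 1 := by
      simp [Polynomial.IsRoot, hA1]
    obtain ⟨w1, hww1⟩ := Polynomial.dvd_iff_isRoot.mpr hw1
    have hw2 : w1.IsRoot 2 := by
      have hval : (u - (-2*X + 4)).eval 2 = 0 := by simp [hA2]
      rw [hww1] at hval
      simpa using hval
    obtain ⟨p, hp⟩ := Polynomial.dvd_iff_isRoot.mpr hw2
    refine ⟨p, ?_⟩
    have hu' : u = (X - C 1) * ((X - C 2) * p) + (-2*X + 4) := by
      rw [← hp, ← hww1]; ring
    rw [hu', Polynomial.C_1, map_ofNat]; ring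
  by_cases h3 : iterEval u 3 1 = 0
  · right; right; left
    have e1 : iterEval u 1 1 = u.eval 1 := iterEval_one' u 1
    have e2 : iterEval u 2 1 = u.eval (iterEval u 1 1) := iterEval_succ u 1 1
    have e3 : iterEval u 3 1 = u.eval (iterEval u 2 1) := iterEval_succ u 2 1
    have hd1 : (1 - iterEval u 1 1) ∣ (iterEval u 1 1 - iterEval u 2 1) := by
      have h := Polynomial.sub_dvd_eval_sub 1 (iterEval u 1 1) u
      rw [← e1, ← e2] at h
      exact h
    have hd2 : (iterEval u 1 1 - iterEval u 2 1) ∣ iterEval u 2 1 := by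
      have h := Polynomial.sub_dvd_eval_sub (iterEval u 1 1) (iterEval u 2 1) u
      rw [← e2, ← e3, h3, sub_zero] at h
      exact h
    have hone : (1 - iterEval u 1 1) ∣ 1 := by
      have hb : (1 - iterEval u 1 1) ∣ iterEval u 2 1 := hd1.trans hd2
      have haa : (1 - iterEval u 1 1) ∣ iterEval u 1 1 := by
        have := dvd_add hd1 hb
        simpa using this
      have := dvd_add (dvd_refl (1 - iterEval u 1 1)) haa
      simpa using this
    have ha : iterEval u 1 1 = 2 := by
      rcases Int.isUnit_iff.mp (isUnit_of_dvd_one hone) with h | h <;> omega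
    have hd3 : (1 - iterEval u 2 1) ∣ (2:ℤ) := by
      have h := Polynomial.sub_dvd_eval_sub 1 (iterEval u 2 1) u
      rw [← e1, ← e3, h3, ha, sub_zero] at h
      exact h
    have hb3 : iterEval u 2 1 = 3 := by
      have hna : (1 - iterEval u 2 1).natAbs ∣ 2 := by
        have := Int.natAbs_dvd_natAbs.mpr hd3
        simpa using this
      have hle : (1 - iterEval u 2 1).natAbs ≤ 2 := Nat.le_of_dvd (by norm_num) hna
      have hcases : iterEval u 2 1 = 0 ∨ iterEval u 2 1 = 2 ∨ iterEval u 2 1 = -1 ∨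
          iterEval u 2 1 = 3 := by
        have hne : (1 - iterEval u 2 1).natAbs ≠ 0 := by
          intro h0
          rw [h0] at hna
          norm_num at hna
        omega
      rcases hcases with h | h | h | h
      · exact absurd h h2
      · exfalso
        have he : iterEval u 3 1 = iterEval u 2 1 := by
          conv_lhs => rw [e3, h, ← ha, ← e2]
        rw [h3, h] at he
        exact absurd he (by norm_num)
      · exfalso
        rw [h, ha] at hd2
        norm_num at hd2
      · exact h
    have hA1 : u.eval 1 = 2 := by rw [← e1]; exact ha
    have hA2 : u.eval 2 = 3 := by rw [← ha, ← e2, hb3]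
    have hA3 : u.eval 3 = 0 := by rw [← hb3, ← e3, h3]
    have hw1 : (u - (-2*X^2 + 7*X - 3)).IsRoot 1 := by
      simp [Polynomial.IsRoot, hA1]
    obtain ⟨w1, hww1⟩ := Polynomial.dvd_iff_isRoot.mpr hw1
    have hw2 : w1.IsRoot 2 := by
      have hval : (u - (-2*X^2 + 7*X - 3)).eval 2 = 0 := by simp [hA2]
      rw [hww1] at hval
      simpa using hval
    obtain ⟨w2, hww2⟩ := Polynomial.dvd_iff_isRoot.mpr hw2
    have hw3 : w2.IsRoot 3 := by
      have hval : (u - (-2*X^2 + 7*X - 3)).eval 3 = 0 := by simp [hA3]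
      rw [hww1, hww2] at hval
      simp at hval
      -- hval : (3 - 1) * ((3 - 2) * eval 3 w2) = 0 or simplified
      simpa [Polynomial.IsRoot] using hval
    obtain ⟨p, hp⟩ := Polynomial.dvd_iff_isRoot.mpr hw3
    refine ⟨p, ?_⟩
    have hu' : u = (X - C 1) * ((X - C 2) * ((X - C 3) * p)) + (-2*X^2 + 7*X - 3) := by
      rw [← hp, ← hww2, ← hww1]; ring
    rw [hu', Polynomial.C_1, map_ofNat, map_ofNat]; ring
  · right; right; right
    exact eq_X_add_one u hLN h1 h2 h3

private lemma nilp_index_one (p : Polynomial ℤ) : NilpotentOfIndex ((X - 1) * p) 1 1 := by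
  refine ⟨le_rfl, ?_, ?_⟩
  · rw [iterEval_one']; simp
  · intro m hm1 hm2; omega

private lemma nilp_index_two (p : Polynomial ℤ) :
    NilpotentOfIndex (-2 * X + 4 + p * (X - 1) * (X - 2)) 1 2 := by
  have hv1 : Polynomial.eval 1 (-2 * X + 4 + p * (X - 1) * (X - 2)) = 2 := by simp
  have hv2 : Polynomial.eval 2 (-2 * X + 4 + p * (X - 1) * (X - 2)) = 0 := by simp
  refine ⟨by norm_num, ?_, ?_⟩
  · rw [iterEval_two', hv1, hv2]
  · intro m hm1 hm2
    have : m = 1 := by omega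
    subst this
    rw [iterEval_one', hv1]
    norm_num

private lemma nilp_index_three (p : Polynomial ℤ) :
    NilpotentOfIndex (-2 * X ^ 2 + 7 * X - 3 + p * (X - 1) * (X - 2) * (X - 3)) 1 3 := by
  have hv1 : Polynomial.eval 1 (-2 * X ^ 2 + 7 * X - 3 + p * (X - 1) * (X - 2) * (X - 3)) = 2 := by
    simp
  have hv2 : Polynomial.eval 2 (-2 * X ^ 2 + 7 * X - 3 + p * (X - 1) * (X - 2) * (X - 3)) = 3 := by
    simp
  have hv3 : Polynomial.eval 3 (-2 * X ^ 2 + 7 * X - 3 + p * (X - 1) * (X - 2) * (X - 3)) = 0 := by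
    simp
  refine ⟨by norm_num, ?_, ?_⟩
  · rw [iterEval_three', hv1, hv2, hv3]
  · intro m hm1 hm2
    interval_cases m
    · rw [iterEval_one', hv1]; norm_num
    · rw [iterEval_two', hv1, hv2]; norm_num

private lemma not_nilp_X1 : ¬ IsNilpotentAt (X + 1) 1 := by
  rintro ⟨n, hn1, hn0⟩
  rw [iter_X1] at hn0
  omega

private lemma backward (u : ℤ[X])
    (h : (∃ p : Polynomial ℤ, p ≠ 0 ∧ u = (X - 1) * p) ∨
      (∃ p : Polynomial ℤ, u = -2 * X + 4 + p * (X - 1) * (X - 2)) ∨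
      (∃ p : Polynomial ℤ, u = -2 * X ^ 2 + 7 * X - 3 + p * (X - 1) * (X - 2) * (X - 3)) ∨
      u = X + 1) : LocallyNilpotentAt u 1 := by
  rcases h with ⟨p, hp0, rfl⟩ | ⟨p, rfl⟩ | ⟨p, rfl⟩ | rfl
  · intro q hq
    exact ⟨1, le_rfl, by rw [(nilp_index_one p).2.1]; exact dvd_zero _⟩
  · intro q hq
    exact ⟨2, by norm_num, by rw [(nilp_index_two p).2.1]; exact dvd_zero _⟩
  · intro q hq
    exact ⟨3, by norm_num, by rw [(nilp_index_three p).2.1]; exact dvd_zero _⟩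
  · intro q hq
    refine ⟨q - 1, by have := hq.two_le; omega, ?_⟩
    rw [iter_X1]
    have h2 := hq.two_le
    have e : ((q-1:ℕ):ℤ) + 1 = (q:ℤ) := by omega
    rw [e]

theorem locally_nilpotent_at_one_classification (u : Polynomial ℤ) (hu : 0 < u.natDegree) :
    (LocallyNilpotentAt u 1 ↔
      ((∃ p : Polynomial ℤ, p ≠ 0 ∧ u = (X - 1) * p) ∨
       (∃ p : Polynomial ℤ, u = -2 * X + 4 + p * (X - 1) * (X - 2)) ∨
       (∃ p : Polynomial ℤ, u = -2 * X ^ 2 + 7 * X - 3 + p * (X - 1) * (X - 2) * (X - 3)) ∨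
       u = X + 1)) ∧
    (∀ p : Polynomial ℤ, p ≠ 0 → NilpotentOfIndex ((X - 1) * p) 1 1) ∧
    (∀ p : Polynomial ℤ, NilpotentOfIndex (-2 * X + 4 + p * (X - 1) * (X - 2)) 1 2) ∧
    (∀ p : Polynomial ℤ,
      NilpotentOfIndex (-2 * X ^ 2 + 7 * X - 3 + p * (X - 1) * (X - 2) * (X - 3)) 1 3) ∧
    ¬ IsNilpotentAt (X + 1) 1 := by
  exact ⟨⟨forward u hu, backward u⟩, fun p _ => nilp_index_one p,
    nilp_index_two, nilp_index_three, not_nilp_X1⟩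
end

section
/- Let u ∈ ℤ[X] be nonconstant. Then u is locally nilpotent at −1 if and only if u has one of the following forms: (1) u(X) = (X+1)·p(X) for some nonzero p ∈ ℤ[X]; (2) u(X) = −2X − 4 + p(X)·(X+1)(X+2) for some p ∈ ℤ[X]; (3) u(X) = 2X² + 7X + 3 + p(X)·(X+1)(X+2)(X+3) for some p ∈ ℤ[X]; (4) u(X) = X − 1. Moreover, polynomials of forms (1), (2), (3) are nilpotent at −1 of nilpotency index 1, 2, 3 respectively, while X − 1 is not nilpotent at −1. -/
open Polynomial

namespace LocNil

lemma iterEval_zero (u : Polynomial ℤ) (r : ℤ) : iterEval u 0 r = r := rfl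

lemma iterEval_succ (u : Polynomial ℤ) (n : ℕ) (r : ℤ) :
    iterEval u (n+1) r = u.eval (iterEval u n r) := by
  unfold iterEval
  rw [Function.iterate_succ_apply']

/-- the orbit of -1 -/
noncomputable def s (u : Polynomial ℤ) : ℕ → ℤ
  | 0 => -1
  | n + 1 => u.eval (s u n)

lemma s_eq (u : Polynomial ℤ) : ∀ n, s u n = iterEval u n (-1)
  | 0 => rfl
  | n+1 => by rw [s, iterEval_succ, s_eq u n]

lemma hits (u : Polynomial ℤ) (hL : LocallyNilpotentAt u (-1)) {q : ℕ} (hq : q.Prime) :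
    ∃ m : ℕ, 1 ≤ m ∧ (q : ℤ) ∣ s u m := by
  obtain ⟨m, h1, h2⟩ := hL q hq
  exact ⟨m, h1, by rw [s_eq]; exact h2⟩

lemma sub_dvd (u : Polynomial ℤ) (i j t : ℕ) :
    s u i - s u j ∣ s u (i+t) - s u (j+t) := by
  induction t with
  | zero => simp
  | succ t ih =>
      have h2 : s u (i+t) - s u (j+t) ∣ s u (i+t+1) - s u (j+t+1) :=
        Polynomial.sub_dvd_eval_sub _ _ u
      exact ih.trans h2

lemma earlier_hit (u : Polynomial ℤ) (hL : LocallyNilpotentAt u (-1)) {q : ℕ} (hq : q.Prime)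
    {i j : ℕ} (hij : i < j) (hdvd : (q:ℤ) ∣ s u j - s u i) :
    ∃ m, 1 ≤ m ∧ m < j ∧ (q:ℤ) ∣ s u m := by
  have key : ∀ m, 1 ≤ m → (q:ℤ) ∣ s u m → ∃ m', 1 ≤ m' ∧ m' < j ∧ (q:ℤ) ∣ s u m' := by
    intro m
    induction m using Nat.strong_induction_on with
    | _ m IH =>
      intro hm1 hmd
      by_cases hmj : m < j
      · exact ⟨m, hm1, hmj, hmd⟩
      · push_neg at hmj
        set t := m - j with ht
        have hjt : j + t = m := by omega
        have h1 : (q:ℤ) ∣ s u (j+t) - s u (i+t) := hdvd.trans (sub_dvd u j i t)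
        have h2 : (q:ℤ) ∣ s u (i+t) := by
          have := dvd_sub (hjt ▸ hmd) h1
          simpa using this
        by_cases hit : 1 ≤ i + t
        · exact IH (i+t) (by omega) hit h2
        · exfalso
          have hi0 : i + t = 0 := by omega
          rw [hi0] at h2
          simp only [s] at h2
          have h3 : (q:ℤ) ∣ 1 := dvd_neg.mp h2
          have h4 := Int.le_of_dvd one_pos h3
          have h5 := hq.two_le
          omega
  obtain ⟨m, h1, h2⟩ := hits u hL hq
  exact key m h1 h2


lemma periodic_dead (u : Polynomial ℤ) (hL : LocallyNilpotentAt u (-1)) {i j : ℕ}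
    (hij : i < j) (heq : s u j = s u i)
    (hnz : ∀ m, 1 ≤ m → m ≤ j → s u m ≠ 0) : False := by
  have hshift : ∀ t, s u (j + t) = s u (i + t) := by
    intro t
    induction t with
    | zero => simpa using heq
    | succ t ih => show s u ((j+t)+1) = s u ((i+t)+1); rw [s, s, ih]
  have hrep : ∀ m, 1 ≤ m → ∃ m', 1 ≤ m' ∧ m' ≤ j ∧ s u m' = s u m := by
    intro m
    induction m using Nat.strong_induction_on with
    | _ m IH =>
      intro hm1
      by_cases hmj : m ≤ j
      · exact ⟨m, hm1, hmj, rfl⟩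
      · push_neg at hmj
        have hjt : j + (m - j) = m := by omega
        have h1 : s u m = s u (i + (m - j)) := by
          conv_lhs => rw [← hjt]
          rw [hshift]
        obtain ⟨m', a1, a2, a3⟩ := IH (i + (m-j)) (by omega) (by omega)
        exact ⟨m', a1, a2, by rw [a3, ← h1]⟩
  set B := (Finset.Icc 1 j).sup (fun m => (s u m).natAbs) with hB
  obtain ⟨q, hqB, hq⟩ := Nat.exists_infinite_primes (B+1)
  obtain ⟨m, hm1, hmd⟩ := hits u hL hq
  obtain ⟨m', h1, h2, h3⟩ := hrep m hm1
  have hd' : (q:ℤ) ∣ s u m' := by rw [h3]; exact hmd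
  have hne : s u m' ≠ 0 := hnz m' h1 h2
  have hle : (s u m').natAbs ≤ B := by
    apply Finset.le_sup (f := fun m => (s u m).natAbs)
    exact Finset.mem_Icc.mpr ⟨h1, h2⟩
  have hq' : q ∣ (s u m').natAbs := by
    have := Int.natAbs_dvd_natAbs.mpr hd'
    simpa using this
  have := Nat.le_of_dvd (Int.natAbs_pos.mpr hne) hq'
  omega


lemma no_prime_small {z : ℤ} (h : ∀ q : ℕ, q.Prime → (q:ℤ) ∣ z → False) :
    z = 0 ∨ z = 1 ∨ z = -1 := by
  by_contra hc
  push_neg at hc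
  obtain ⟨h0, h1, h2⟩ := hc
  have hna : z.natAbs ≠ 1 := by
    intro hn
    rcases Int.natAbs_eq_iff.mp hn with h | h <;> simp_all
  obtain ⟨p, hp, hpd⟩ := Int.exists_prime_and_dvd hna
  have hq : p.natAbs.Prime := Int.prime_iff_natAbs_prime.mp hp
  exact h p.natAbs hq (Int.natAbs_dvd.mpr hpd)

lemma only_two_small {z : ℤ} (h : ∀ q : ℕ, q.Prime → (q:ℤ) ∣ z → q = 2)
    (hodd : ¬ (2:ℤ) ∣ z) : z = 1 ∨ z = -1 := by
  have hz : ∀ q : ℕ, q.Prime → (q:ℤ) ∣ z → False := by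
    intro q hq hd
    have h2 := h q hq hd
    subst h2
    exact hodd (by exact_mod_cast hd)
  rcases no_prime_small hz with h0 | h1 | h2
  · exact absurd (by rw [h0]; exact dvd_zero _) hodd
  · exact Or.inl h1
  · exact Or.inr h2

lemma two_mod_four_small {z : ℤ} (h : ∀ q : ℕ, q.Prime → (q:ℤ) ∣ z → q = 2)
    (h2 : (2:ℤ) ∣ z) (h4 : ¬ (4:ℤ) ∣ z) : z = 2 ∨ z = -2 := by
  obtain ⟨w, hw⟩ := h2
  have hwodd : ¬ (2:ℤ) ∣ w := by
    rintro ⟨v, hv⟩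
    exact h4 ⟨v, by rw [hw, hv]; ring⟩
  have hwprime : ∀ q : ℕ, q.Prime → (q:ℤ) ∣ w → q = 2 := by
    intro q hq hd
    exact h q hq (by rw [hw]; exact hd.mul_left 2)
  rcases only_two_small hwprime hwodd with h1 | h1
  · left; rw [hw, h1]; ring
  · right; rw [hw, h1]; ring


lemma step (u : Polynomial ℤ) (hL : LocallyNilpotentAt u (-1)) (N : ℕ)
    (hind : ∀ i, i ≤ N → s u i = -((i:ℤ)+1)) :
    s u (N+1) = -((N:ℤ)+2) ∨ (N ≤ 2 ∧ s u (N+1) = 0) := by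
  have hnz : ∀ m, 1 ≤ m → m ≤ N → s u m ≠ 0 := by
    intro m h1 h2
    rw [hind m h2]
    intro hc
    omega
  have haveq : ∀ i0, i0 ≤ N → ∀ q : ℕ, q.Prime → (q:ℤ) ∣ s u (N+1) - s u i0 →
      ∃ m, 1 ≤ m ∧ m ≤ N ∧ (q:ℤ) ∣ ((m:ℤ)+1) := by
    intro i0 hi0 q hq hd
    obtain ⟨m, h1, h2, h3⟩ := earlier_hit u hL hq (i := i0) (j := N+1) (by omega) hd
    refine ⟨m, h1, by omega, ?_⟩
    rw [hind m (by omega)] at h3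
    exact dvd_neg.mp h3
  have havek : ∀ k : ℕ, 1 ≤ k → k ≤ N → (k:ℤ) ∣ s u (N+1) + (N:ℤ) + 2 := by
    intro k h1 h2
    have hd := sub_dvd u (N-k) N 1
    have e1 : s u (N-k) - s u N = (k:ℤ) := by
      rw [hind (N-k) (by omega), hind N le_rfl]
      have : ((N-k:ℕ):ℤ) = (N:ℤ) - (k:ℤ) := by
        push_cast [Nat.cast_sub h2]
        ring
      rw [this]
      ring
    have e2 : s u ((N-k)+1) = -(((N:ℤ) - k) + 2) := by
      rw [hind ((N-k)+1) (by omega)]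
      push_cast [Nat.cast_sub h2]
      ring
    rw [e1, e2] at hd
    have hrw : s u (N+1) + (N:ℤ) + 2 = -(-(((N:ℤ) - k) + 2) - s u (N+1)) + k := by ring
    rw [hrw]
    exact dvd_add (dvd_neg.mpr hd) dvd_rfl
  rcases Nat.lt_or_ge N 4 with hN4 | hN4
  · -- small cases N = 0, 1, 2, 3
    interval_cases N
    · -- N = 0
      have hs0 : s u 0 = -1 := by simpa using hind 0 (by omega)
      have hq0 : ∀ q : ℕ, q.Prime → (q:ℤ) ∣ s u (0+1) - s u 0 → False := by
        intro q hq hd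
        obtain ⟨m, h1, h2, _⟩ := haveq 0 le_rfl q hq hd
        omega
      rcases no_prime_small hq0 with h | h | h
      · exfalso
        have hper : s u (0+1) = s u 0 := by omega
        apply periodic_dead u hL (i:=0) (j:=1) one_pos hper
        intro m h1 h2
        have hm : m = 1 := by omega
        subst hm
        have : s u 1 = -1 := by rw [show s u 1 = s u (0+1) from rfl, hper, hs0]
        rw [this]; norm_num
      · right
        refine ⟨by omega, by omega⟩
      · left
        have e : s u (0+1) = s u 1 := rfl
        push_cast
        omega
    · -- N = 1
      have hs0 : s u 0 = -1 := by simpa using hind 0 (by omega)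
      have hs1 : s u 1 = -2 := by simpa using hind 1 (by omega)
      have hall : ∀ i0, i0 ≤ 1 → ∀ q : ℕ, q.Prime → (q:ℤ) ∣ s u (1+1) - s u i0 → q = 2 := by
        intro i0 hi0 q hq hd
        obtain ⟨m, h1, h2, h3⟩ := haveq i0 hi0 q hq hd
        have hm : m = 1 := by omega
        subst hm
        exact (Nat.prime_dvd_prime_iff_eq hq Nat.prime_two).mp (by exact_mod_cast h3)
      by_cases hpar : (2:ℤ) ∣ s u (1+1) - s u 1
      · have hodd : ¬ (2:ℤ) ∣ s u (1+1) - s u 0 := by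
          intro hc
          have h1 : (2:ℤ) ∣ 1 := by
            have hh := dvd_sub hc hpar
            have e : (s u (1+1) - s u 0) - (s u (1+1) - s u 1) = -1 := by rw [hs0, hs1]; ring
            rw [e] at hh
            exact dvd_neg.mp hh
          omega
        rcases only_two_small (fun q hq hd => hall 0 (by omega) q hq hd) hodd with h | h
        · right
          exact ⟨by omega, by omega⟩
        · exfalso
          have hper : s u (1+1) = s u 1 := by omega
          apply periodic_dead u hL (i:=1) (j:=2) (by omega) hper
          intro m h1 h2
          interval_cases m
          · rw [hs1]; norm_num
          · have : s u 2 = -2 := by rw [show s u 2 = s u (1+1) from rfl, hper, hs1]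
            rw [this]; norm_num
      · rcases only_two_small (fun q hq hd => hall 1 (by omega) q hq hd) hpar with h | h
        · exfalso
          have hper : s u (1+1) = s u 0 := by omega
          apply periodic_dead u hL (i:=0) (j:=2) (by omega) hper
          intro m h1 h2
          interval_cases m
          · rw [hs1]; norm_num
          · have : s u 2 = -1 := by rw [show s u 2 = s u (1+1) from rfl, hper, hs0]
            rw [this]; norm_num
        · left
          have e : s u (1+1) = s u 2 := rfl
          push_cast
          omega
    · -- N = 2
      have hs0 : s u 0 = -1 := by simpa using hind 0 (by omega)
      have hs1 : s u 1 = -2 := by simpa using hind 1 (by omega)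
      have hs2 : s u 2 = -3 := by simpa using hind 2 (by omega)
      have hall : ∀ i0, i0 ≤ 2 → ∀ q : ℕ, q.Prime → (q:ℤ) ∣ s u (2+1) - s u i0 →
          q = 2 ∨ q = 3 := by
        intro i0 hi0 q hq hd
        obtain ⟨m, h1, h2, h3⟩ := haveq i0 hi0 q hq hd
        interval_cases m
        · exact Or.inl ((Nat.prime_dvd_prime_iff_eq hq Nat.prime_two).mp (by exact_mod_cast h3))
        · exact Or.inr ((Nat.prime_dvd_prime_iff_eq hq Nat.prime_three).mp (by exact_mod_cast h3))
      have hk2 : (2:ℤ) ∣ s u (2+1) + 4 := by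
        have := havek 2 (by omega) (by omega)
        push_cast at this
        have e : s u (2+1) + 4 = s u (2+1) + 2 + 2 := by ring
        rw [e]
        exact this
      by_cases h3d : (3:ℤ) ∣ s u (2+1) - s u 2
      · have henp : ∀ q : ℕ, q.Prime → (q:ℤ) ∣ s u (2+1) - s u 0 → False := by
          intro q hq hd
          rcases hall 0 (by omega) q hq hd with h | h
          · subst h
            rw [hs0] at hd
            omega
          · subst h
            rw [hs0] at hd
            rw [hs2] at h3d
            omega
        rcases no_prime_small henp with h | h | h
        · exfalso
          have hper : s u (2+1) = s u 0 := by omega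
          apply periodic_dead u hL (i:=0) (j:=3) (by omega) hper
          intro m h1 h2
          interval_cases m
          · rw [hs1]; norm_num
          · rw [hs2]; norm_num
          · have : s u 3 = -1 := by rw [show s u 3 = s u (2+1) from rfl, hper, hs0]
            rw [this]; norm_num
        · right
          exact ⟨by omega, by omega⟩
        · exfalso
          have hper : s u (2+1) = s u 1 := by omega
          apply periodic_dead u hL (i:=1) (j:=3) (by omega) hper
          intro m h1 h2
          interval_cases m
          · rw [hs1]; norm_num
          · rw [hs2]; norm_num
          · have : s u 3 = -2 := by rw [show s u 3 = s u (2+1) from rfl, hper, hs1]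
            rw [this]; norm_num
      · have hdnp : ∀ q : ℕ, q.Prime → (q:ℤ) ∣ s u (2+1) - s u 2 → False := by
          intro q hq hd
          rcases hall 2 (by omega) q hq hd with h | h
          · subst h
            rw [hs2] at hd
            omega
          · subst h
            exact h3d hd
        rcases no_prime_small hdnp with h | h | h
        · rw [hs2] at h
          omega
        · exfalso
          have hper : s u (2+1) = s u 1 := by omega
          apply periodic_dead u hL (i:=1) (j:=3) (by omega) hper
          intro m h1 h2
          interval_cases m
          · rw [hs1]; norm_num
          · rw [hs2]; norm_num
          · have : s u 3 = -2 := by rw [show s u 3 = s u (2+1) from rfl, hper, hs1]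
            rw [this]; norm_num
        · left
          have e : s u (2+1) = s u 3 := rfl
          push_cast
          omega
    · -- N = 3
      have hs0 : s u 0 = -1 := by simpa using hind 0 (by omega)
      have hs1 : s u 1 = -2 := by simpa using hind 1 (by omega)
      have hs2 : s u 2 = -3 := by simpa using hind 2 (by omega)
      have hs3 : s u 3 = -4 := by simpa using hind 3 (by omega)
      have hk2 : (2:ℤ) ∣ s u (3+1) + 5 := by
        have := havek 2 (by omega) (by omega)
        push_cast at this
        have e : s u (3+1) + 5 = s u (3+1) + 3 + 2 := by ring
        rw [e]
        exact this
      have hk3 : (3:ℤ) ∣ s u (3+1) + 5 := by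
        have := havek 3 (by omega) (by omega)
        push_cast at this
        have e : s u (3+1) + 5 = s u (3+1) + 3 + 2 := by ring
        rw [e]
        exact this
      have hdnp : ∀ q : ℕ, q.Prime → (q:ℤ) ∣ s u (3+1) - s u 3 → False := by
        intro q hq hd
        obtain ⟨m, h1, h2, h3⟩ := haveq 3 le_rfl q hq hd
        have hq23 : q = 2 ∨ q = 3 := by
          interval_cases m
          · exact Or.inl ((Nat.prime_dvd_prime_iff_eq hq Nat.prime_two).mp (by exact_mod_cast h3))
          · exact Or.inr ((Nat.prime_dvd_prime_iff_eq hq Nat.prime_three).mp (by exact_mod_cast h3))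
          · refine Or.inl ?_
            have h4 : q ∣ 2^2 := by
              have : (q:ℤ) ∣ 4 := by exact_mod_cast h3
              have := Int.natCast_dvd_natCast.mp (show ((q:ℕ):ℤ) ∣ ((4:ℕ):ℤ) by exact_mod_cast this)
              simpa using this
            have := hq.dvd_of_dvd_pow h4
            exact (Nat.prime_dvd_prime_iff_eq hq Nat.prime_two).mp this
        rcases hq23 with h | h
        · subst h
          rw [hs3] at hd
          omega
        · subst h
          rw [hs3] at hd
          omega
      rcases no_prime_small hdnp with h | h | h
      · rw [hs3] at h
        omega
      · exfalso
        have hper : s u (3+1) = s u 2 := by omega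
        apply periodic_dead u hL (i:=2) (j:=4) (by omega) hper
        intro m h1 h2
        interval_cases m
        · rw [hs1]; norm_num
        · rw [hs2]; norm_num
        · rw [hs3]; norm_num
        · have : s u 4 = -3 := by rw [show s u 4 = s u (3+1) from rfl, hper, hs2]
          rw [this]; norm_num
      · left
        have e : s u (3+1) = s u 4 := rfl
        push_cast
        omega
  · -- N ≥ 4
    left
    have hsN : s u N = -((N:ℤ)+1) := hind N le_rfl
    have hsN1 : s u (N-1) = -(N:ℤ) := by
      rw [hind (N-1) (by omega)]
      push_cast [Nat.cast_sub (by omega : 1 ≤ N)]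
      ring
    have hdq : ∀ q : ℕ, q.Prime → (q:ℤ) ∣ s u (N+1) - s u N → q = N+1 := by
      intro q hq hqd
      obtain ⟨m, h1, h2, h3⟩ := haveq N le_rfl q hq hqd
      have hq1 : q ∣ m+1 := by exact_mod_cast h3
      have hqle : q ≤ m+1 := Nat.le_of_dvd (by omega) hq1
      by_contra hne
      have h2' := havek q hq.one_le (by omega)
      have hcon : (q:ℤ) ∣ 1 := by
        have hh := dvd_sub h2' hqd
        have e : (s u (N+1) + (N:ℤ) + 2) - (s u (N+1) - s u N) = 1 := by rw [hsN]; ring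
        rwa [e] at hh
      have := Int.le_of_dvd one_pos hcon
      have := hq.two_le
      omega
    by_cases hd0 : s u (N+1) - s u N = 0
    · exfalso
      have hper : s u (N+1) = s u N := by omega
      apply periodic_dead u hL (i:=N) (j:=N+1) (by omega) hper
      intro m h1 h2
      rcases Nat.lt_or_ge m (N+1) with h | h
      · exact hnz m h1 (by omega)
      · have hm : m = N+1 := by omega
        subst hm
        rw [hper, hsN]
        intro hc
        omega
    by_cases hd1 : s u (N+1) - s u N = 1
    · exfalso
      have hper : s u (N+1) = s u (N-1) := by
        rw [hsN1]
        omega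
      apply periodic_dead u hL (i:=N-1) (j:=N+1) (by omega) hper
      intro m h1 h2
      rcases Nat.lt_or_ge m (N+1) with h | h
      · exact hnz m h1 (by omega)
      · have hm : m = N+1 := by omega
        subst hm
        rw [hper, hsN1]
        intro hc
        omega
    by_cases hdm1 : s u (N+1) - s u N = -1
    · rw [hsN] at hdm1
      omega
    · exfalso
      have hna : (s u (N+1) - s u N).natAbs ≠ 1 := by
        intro hc
        rcases Int.natAbs_eq_iff.mp hc with h | h
        · exact hd1 h
        · exact hdm1 h
      obtain ⟨p0, hp0, hp0d⟩ := Int.exists_prime_and_dvd hna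
      have hq0 : p0.natAbs.Prime := Int.prime_iff_natAbs_prime.mp hp0
      have hq0d : ((p0.natAbs : ℕ):ℤ) ∣ s u (N+1) - s u N := Int.natAbs_dvd.mpr hp0d
      have hqeq := hdq p0.natAbs hq0 hq0d
      rw [hqeq] at hq0d
      have hDq : ∀ q : ℕ, q.Prime → (q:ℤ) ∣ s u (N+1) - s u (N-1) → q = 2 := by
        intro q hq hqD
        obtain ⟨m, h1, h2, h3⟩ := haveq (N-1) (by omega) q hq hqD
        have hq1 : q ∣ m+1 := by exact_mod_cast h3
        have hqle : q ≤ m+1 := Nat.le_of_dvd (by omega) hq1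
        by_cases hqp : q = N+1
        · exfalso
          subst hqp
          have hcon : (((N+1:ℕ)):ℤ) ∣ 1 := by
            have hh := dvd_sub hq0d hqD
            have e : (s u (N+1) - s u N) - (s u (N+1) - s u (N-1)) = 1 := by
              rw [hsN, hsN1]; ring
            rwa [e] at hh
          have := Int.le_of_dvd one_pos hcon
          omega
        · have h2' := havek q hq.one_le (by omega)
          have hcon : (q:ℤ) ∣ 2 := by
            have hh := dvd_sub h2' hqD
            have e : (s u (N+1) + (N:ℤ) + 2) - (s u (N+1) - s u (N-1)) = 2 := by
              rw [hsN1]; ring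
            rwa [e] at hh
          have h2le := Int.le_of_dvd (by norm_num) hcon
          have := hq.two_le
          omega
      have hD2 : (2:ℤ) ∣ s u (N+1) - s u (N-1) := by
        have h2' := havek 2 (by omega) (by omega)
        push_cast at h2'
        have e : s u (N+1) - s u (N-1) = (s u (N+1) + (N:ℤ) + 2) - 2 := by rw [hsN1]; ring
        rw [e]
        exact dvd_sub h2' (dvd_refl 2)
      have hD4 : ¬ (4:ℤ) ∣ s u (N+1) - s u (N-1) := by
        intro hc
        have h4' := havek 4 (by omega) (by omega)
        push_cast at h4'
        have h42 : (4:ℤ) ∣ 2 := by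
          have hh := dvd_sub h4' hc
          have e : (s u (N+1) + (N:ℤ) + 2) - (s u (N+1) - s u (N-1)) = 2 := by
            rw [hsN1]; ring
          rwa [e] at hh
        omega
      rcases two_mod_four_small hDq hD2 hD4 with hD | hD
      · have hd3 : s u (N+1) - s u N = 3 := by
          rw [hsN1] at hD
          rw [hsN]
          omega
        rw [hd3] at hq0d
        have := Int.le_of_dvd (by norm_num) hq0d
        omega
      · have : s u (N+1) - s u N = -1 := by
          rw [hsN1] at hD
          rw [hsN]
          omega
        exact hdm1 this



lemma prefix_lin (u : Polynomial ℤ) (hL : LocallyNilpotentAt u (-1)) :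
    ∀ N, (∀ m, 1 ≤ m → m ≤ N → s u m ≠ 0) → ∀ i, i ≤ N → s u i = -((i:ℤ)+1) := by
  intro N
  induction N with
  | zero =>
      intro _ i hi
      have : i = 0 := by omega
      subst this
      rw [show s u 0 = -1 from rfl]
      norm_num
  | succ N IH =>
      intro hnz i hi
      rcases Nat.lt_or_ge i (N+1) with h | h
      · exact IH (fun m a b => hnz m a (by omega)) i (by omega)
      · have hi' : i = N+1 := by omega
        subst hi'
        have hstep := step u hL N (IH (fun m a b => hnz m a (by omega)) )
        rcases hstep with h | ⟨_, h0⟩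
        · rw [h]; push_cast; ring
        · exact absurd h0 (hnz (N+1) (by omega) le_rfl)

lemma eq_X_sub_one (u : Polynomial ℤ) (hL : LocallyNilpotentAt u (-1))
    (hno : ∀ m, 1 ≤ m → s u m ≠ 0) : u = X - 1 := by
  have hs : ∀ i, s u i = -((i:ℤ)+1) :=
    fun i => prefix_lin u hL i (fun m a _ => hno m a) i le_rfl
  have hroot : ∀ i : ℕ, (u - (X - 1)).IsRoot (-((i:ℤ)+1)) := by
    intro i
    have h1 : u.eval (-((i:ℤ)+1)) = -((i:ℤ)+2) := by
      have h2 : s u (i+1) = u.eval (s u i) := rfl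
      rw [hs i, hs (i+1)] at h2
      rw [← h2]
      push_cast
      ring
    have hev : eval (-((i:ℤ)+1)) (u - (X - 1)) = 0 := by
      rw [eval_sub, h1, eval_sub, eval_X, eval_one]
      ring
    exact hev
  have hinj : Function.Injective (fun i : ℕ => -((i:ℤ)+1)) := by
    intro a b hab
    simp only at hab
    omega
  have hinf : {x : ℤ | (u - (X-1)).IsRoot x}.Infinite :=
    Set.infinite_of_injective_forall_mem hinj (fun i => hroot i)
  have hz := Polynomial.eq_zero_of_infinite_isRoot _ hinf
  have := sub_eq_zero.mp hz
  exact this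


lemma one_root {g : Polynomial ℤ} {r : ℤ} (h1 : g.IsRoot r) : ∃ p, g = (X - C r) * p := by
  obtain ⟨p, hp⟩ := (dvd_iff_isRoot.mpr h1)
  exact ⟨p, hp⟩

lemma nilpotent_forms (u : Polynomial ℤ) (hu : 0 < u.natDegree)
    (hL : LocallyNilpotentAt u (-1)) (h0 : ∃ n, 1 ≤ n ∧ s u n = 0) :
    (∃ p : Polynomial ℤ, p ≠ 0 ∧ u = (X + 1) * p) ∨
    (∃ p : Polynomial ℤ, u = -2 * X - 4 + p * (X + 1) * (X + 2)) ∨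
    (∃ p : Polynomial ℤ, u = 2 * X ^ 2 + 7 * X + 3 + p * (X + 1) * (X + 2) * (X + 3)) := by
  classical
  have hn := Nat.find_spec h0
  set n := Nat.find h0 with hndef
  have hnz : ∀ m, 1 ≤ m → m ≤ n - 1 → s u m ≠ 0 := by
    intro m h1 h2 hc
    exact Nat.find_min h0 (by omega) ⟨h1, hc⟩
  have hpre : ∀ i, i ≤ n - 1 → s u i = -((i:ℤ)+1) := prefix_lin u hL (n-1) hnz
  have hstep := step u hL (n-1) hpre
  have hne : n - 1 + 1 = n := by omega
  rw [hne] at hstep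
  rcases hstep with h | ⟨h3, _⟩
  · exfalso
    rw [hn.2] at h
    omega
  · rcases (show n = 1 ∨ n = 2 ∨ n = 3 by omega) with h | h | h
    · -- index 1
      left
      have hev : u.eval (-1) = 0 := by
        have h1 : s u 1 = 0 := by rw [← h]; exact hn.2
        exact h1
      obtain ⟨p, hp⟩ := one_root (r := -1) hev
      refine ⟨p, ?_, ?_⟩
      · intro hp0
        rw [hp0, mul_zero] at hp
        rw [hp] at hu
        simp at hu
      · rw [hp, map_neg, map_one]
        ring
    · -- index 2
      right; left
      have hev1 : u.eval (-1) = -2 := by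
        have h1 : s u 1 = -2 := by
          have := hpre 1 (by omega)
          simpa using this
        exact h1
      have hev2 : u.eval (-2) = 0 := by
        have h2 : s u 2 = 0 := by rw [← h]; exact hn.2
        have : s u 2 = u.eval (s u 1) := rfl
        rw [this] at h2
        rw [show s u 1 = u.eval (-1) from rfl, hev1] at h2
        exact h2
      have hroot1 : (u + 2*X + 4).IsRoot (-1) := by
        have hh : eval (-1) (u + 2*X + 4) = 0 := by
          simp only [eval_add, eval_mul, eval_X, eval_ofNat, hev1]
          norm_num
        exact hh
      obtain ⟨g, hg⟩ := one_root hroot1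
      have hroot2 : g.IsRoot (-2) := by
        have hev : eval (-2) (u + 2*X + 4) = 0 := by
          simp only [eval_add, eval_mul, eval_X, eval_ofNat, hev2]
          norm_num
        rw [hg] at hev
        simp only [eval_mul, eval_sub, eval_X, eval_C] at hev
        show eval (-2) g = 0
        linarith
      obtain ⟨p, hp⟩ := one_root hroot2
      rw [hp] at hg
      refine ⟨p, ?_⟩
      rw [map_neg, map_one] at hg
      have hC2 : (C (-2) : Polynomial ℤ) = -2 := by
        rw [map_neg]
        norm_num
      rw [hC2] at hg
      linear_combination hg
    · -- index 3
      right; right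
      have hev1 : u.eval (-1) = -2 := by
        have h1 : s u 1 = -2 := by
          have := hpre 1 (by omega)
          simpa using this
        exact h1
      have hev2 : u.eval (-2) = -3 := by
        have h2 : s u 2 = -3 := by
          have := hpre 2 (by omega)
          simpa using this
        rw [show s u 2 = u.eval (s u 1) from rfl, show s u 1 = u.eval (-1) from rfl, hev1] at h2
        exact h2
      have hev3 : u.eval (-3) = 0 := by
        have h3' : s u 3 = 0 := by rw [← h]; exact hn.2
        rw [show s u 3 = u.eval (s u 2) from rfl, show s u 2 = u.eval (s u 1) from rfl,
          show s u 1 = u.eval (-1) from rfl, hev1, hev2] at h3'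
        exact h3'
      have hroot1 : (u - (2*X^2 + 7*X + 3)).IsRoot (-1) := by
        have hh : eval (-1) (u - (2*X^2 + 7*X + 3)) = 0 := by
          simp only [eval_sub, eval_add, eval_mul, eval_pow, eval_X, eval_ofNat, hev1]
          norm_num
        exact hh
      obtain ⟨g, hg⟩ := one_root hroot1
      have hroot2 : g.IsRoot (-2) := by
        have hev : eval (-2) (u - (2*X^2 + 7*X + 3)) = 0 := by
          simp only [eval_sub, eval_add, eval_mul, eval_pow, eval_X, eval_ofNat, hev2]
          norm_num
        rw [hg] at hev
        simp only [eval_mul, eval_sub, eval_X, eval_C] at hev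
        show eval (-2) g = 0
        linarith
      obtain ⟨g2, hg2⟩ := one_root hroot2
      have hroot3 : g2.IsRoot (-3) := by
        have hev : eval (-3) (u - (2*X^2 + 7*X + 3)) = 0 := by
          simp only [eval_sub, eval_add, eval_mul, eval_pow, eval_X, eval_ofNat, hev3]
          norm_num
        rw [hg, hg2] at hev
        simp only [eval_mul, eval_sub, eval_X, eval_C] at hev
        show eval (-3) g2 = 0
        linarith
      obtain ⟨p, hp⟩ := one_root hroot3
      rw [hp] at hg2
      rw [hg2] at hg
      refine ⟨p, ?_⟩
      have hC2 : (C (-2) : Polynomial ℤ) = -2 := by rw [map_neg]; norm_num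
      have hC3 : (C (-3) : Polynomial ℤ) = -3 := by rw [map_neg]; norm_num
      rw [map_neg, map_one, hC2, hC3] at hg
      linear_combination hg


lemma iter1 (u : Polynomial ℤ) : iterEval u 1 (-1) = eval (-1) u := by
  rw [iterEval_succ, iterEval_zero]

lemma iter2 (u : Polynomial ℤ) : iterEval u 2 (-1) = eval (eval (-1) u) u := by
  rw [iterEval_succ, iter1]

lemma iter3 (u : Polynomial ℤ) : iterEval u 3 (-1) = eval (eval (eval (-1) u) u) u := by
  rw [iterEval_succ, iter2]

lemma E2a (p : Polynomial ℤ) : eval (-1) (-2 * X - 4 + p * (X + 1) * (X + 2)) = -2 := by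
  simp

lemma E2b (p : Polynomial ℤ) : eval (-2) (-2 * X - 4 + p * (X + 1) * (X + 2)) = 0 := by
  simp

lemma E3a (p : Polynomial ℤ) :
    eval (-1) (2 * X ^ 2 + 7 * X + 3 + p * (X + 1) * (X + 2) * (X + 3)) = -2 := by
  simp

lemma E3b (p : Polynomial ℤ) :
    eval (-2) (2 * X ^ 2 + 7 * X + 3 + p * (X + 1) * (X + 2) * (X + 3)) = -3 := by
  simp

lemma E3c (p : Polynomial ℤ) :
    eval (-3) (2 * X ^ 2 + 7 * X + 3 + p * (X + 1) * (X + 2) * (X + 3)) = 0 := by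
  simp

lemma iterX : ∀ n : ℕ, iterEval (X - 1 : Polynomial ℤ) n (-1) = -1 - (n:ℤ)
  | 0 => by rw [iterEval_zero]; norm_num
  | (n+1) => by
      rw [iterEval_succ, iterX n]
      simp [eval_sub]
      ring

end LocNil

theorem locally_nilpotent_at_neg_one_classification (u : Polynomial ℤ) (hu : 0 < u.natDegree) :
    (LocallyNilpotentAt u (-1) ↔
      ((∃ p : Polynomial ℤ, p ≠ 0 ∧ u = (X + 1) * p) ∨
       (∃ p : Polynomial ℤ, u = -2 * X - 4 + p * (X + 1) * (X + 2)) ∨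
       (∃ p : Polynomial ℤ, u = 2 * X ^ 2 + 7 * X + 3 + p * (X + 1) * (X + 2) * (X + 3)) ∨
       u = X - 1)) ∧
    (∀ p : Polynomial ℤ, p ≠ 0 → NilpotentOfIndex ((X + 1) * p) (-1) 1) ∧
    (∀ p : Polynomial ℤ, NilpotentOfIndex (-2 * X - 4 + p * (X + 1) * (X + 2)) (-1) 2) ∧
    (∀ p : Polynomial ℤ,
      NilpotentOfIndex (2 * X ^ 2 + 7 * X + 3 + p * (X + 1) * (X + 2) * (X + 3)) (-1) 3) ∧
    ¬ IsNilpotentAt (X - 1) (-1) := by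
  refine ⟨⟨?_, ?_⟩, ?_, ?_, ?_, ?_⟩
  · intro hL
    by_cases h0 : ∃ n, 1 ≤ n ∧ LocNil.s u n = 0
    · rcases LocNil.nilpotent_forms u hu hL h0 with h | h | h
      · exact Or.inl h
      · exact Or.inr (Or.inl h)
      · exact Or.inr (Or.inr (Or.inl h))
    · push_neg at h0
      refine Or.inr (Or.inr (Or.inr (LocNil.eq_X_sub_one u hL ?_)))
      intro m hm
      exact h0 m hm
  · rintro (⟨p, hp0, rfl⟩ | ⟨p, rfl⟩ | ⟨p, rfl⟩ | rfl)
    · intro q hq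
      refine ⟨1, le_rfl, ?_⟩
      rw [LocNil.iter1, show eval (-1) ((X+1)*p) = 0 by simp]
      exact dvd_zero _
    · intro q hq
      refine ⟨2, by norm_num, ?_⟩
      rw [LocNil.iter2, LocNil.E2a, LocNil.E2b]
      exact dvd_zero _
    · intro q hq
      refine ⟨3, by norm_num, ?_⟩
      rw [LocNil.iter3, LocNil.E3a, LocNil.E3b, LocNil.E3c]
      exact dvd_zero _
    · intro q hq
      refine ⟨q - 1, by have := hq.two_le; omega, ?_⟩
      rw [LocNil.iterX]
      have e : (-1 - ((q-1:ℕ):ℤ)) = -(q:ℤ) := by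
        push_cast [Nat.cast_sub hq.one_le]
        ring
      rw [e]
      exact dvd_neg.mpr dvd_rfl
  · intro p hp
    refine ⟨le_rfl, ?_, ?_⟩
    · rw [LocNil.iter1]
      simp
    · intro m h1 h2
      omega
  · intro p
    refine ⟨by norm_num, ?_, ?_⟩
    · rw [LocNil.iter2, LocNil.E2a, LocNil.E2b]
    · intro m h1 h2
      have hm : m = 1 := by omega
      subst hm
      rw [LocNil.iter1, LocNil.E2a]
      norm_num
  · intro p
    refine ⟨by norm_num, ?_, ?_⟩
    · rw [LocNil.iter3, LocNil.E3a, LocNil.E3b, LocNil.E3c]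
    · intro m h1 h2
      rcases (show m = 1 ∨ m = 2 by omega) with h | h <;> subst h
      · rw [LocNil.iter1, LocNil.E3a]
        norm_num
      · rw [LocNil.iter2, LocNil.E3a, LocNil.E3b]
        norm_num
  · rintro ⟨n, h1, h2⟩
    rw [LocNil.iterX] at h2
    omega
end

section
/- A nonconstant polynomial u ∈ ℤ[X] is locally nilpotent at 0 but not nilpotent at 0 if and only if it has one of the following forms: (1) u(X) = X + b with b ∈ ℤ \ {0}; (2) u(X) = aX + b with b ≠ 0, a having at least one prime factor, and every prime factor of a dividing b. -/
open Polynomial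

namespace SZC
open Finset Pell


noncomputable def ox (u : Polynomial ℤ) : ℕ → ℤ := fun n => iterEval u n 0

lemma ox_zero (u : Polynomial ℤ) : ox u 0 = 0 := rfl

lemma ox_succ (u : Polynomial ℤ) (n : ℕ) : ox u (n+1) = eval (ox u n) u := by
  unfold ox iterEval
  rw [Function.iterate_succ_apply']

lemma ox_add (u : Polynomial ℤ) (n m : ℕ) :
    ox u (n + m) = (fun t => eval t u)^[n] (ox u m) := by
  unfold ox iterEval
  rw [Function.iterate_add_apply]

lemma dvd_eval_sub (u : Polynomial ℤ) {c a b : ℤ} (h : c ∣ a - b) :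
    c ∣ eval a u - eval b u :=
  dvd_trans h (sub_dvd_eval_sub a b u)

lemma dvd_iter_sub (u : Polynomial ℤ) {c a b : ℤ} (h : c ∣ a - b) (j : ℕ) :
    c ∣ (fun t => eval t u)^[j] a - (fun t => eval t u)^[j] b := by
  induction j with
  | zero => simpa using h
  | succ j ih =>
      rw [Function.iterate_succ_apply', Function.iterate_succ_apply']
      exact dvd_eval_sub u ih

/-- If `p ∣ x_e` then the orbit is periodic with period `e` mod `p`. -/
lemma per (u : Polynomial ℤ) {c : ℤ} {e : ℕ} (h : c ∣ ox u e) (a : ℕ) :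
    c ∣ ox u (a + e) - ox u a := by
  have h0 : c ∣ ox u e - ox u 0 := by simpa [ox_zero] using h
  have := dvd_iter_sub u h0 a
  rwa [← ox_add, ← ox_add, Nat.add_zero] at this

lemma per_mul (u : Polynomial ℤ) {c : ℤ} {e : ℕ} (h : c ∣ ox u e) (k a : ℕ) :
    c ∣ ox u (a + k * e) - ox u a := by
  induction k with
  | zero => simp
  | succ k ih =>
      have h2 := per u h (a + k * e)
      have := dvd_add h2 ih
      rw [sub_add_sub_cancel] at this
      calc c ∣ ox u (a + k * e + e) - ox u a := this
        _ = ox u (a + (k+1) * e) - ox u a := by ring_nf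

lemma dvd_of_dvd_mul_e (u : Polynomial ℤ) {c : ℤ} {e : ℕ} (h : c ∣ ox u e) (k : ℕ) :
    c ∣ ox u (k * e) := by
  have := per_mul u h k 0
  simpa [ox_zero] using this

section MinPeriod

variable {u : Polynomial ℤ} {p : ℕ}

/-- minimal period of 0 mod p -/
noncomputable def eP (u : Polynomial ℤ) (p : ℕ)
    (hL : ∃ m : ℕ, 1 ≤ m ∧ (p : ℤ) ∣ iterEval u m 0) : ℕ :=
  Nat.find hL

lemma eP_spec (hL : ∃ m : ℕ, 1 ≤ m ∧ (p : ℤ) ∣ iterEval u m 0) :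
    1 ≤ eP u p hL ∧ (p : ℤ) ∣ ox u (eP u p hL) :=
  Nat.find_spec hL

lemma eP_min (hL : ∃ m : ℕ, 1 ≤ m ∧ (p : ℤ) ∣ iterEval u m 0)
    {m : ℕ} (h1 : 1 ≤ m) (hm : m < eP u p hL) : ¬ (p : ℤ) ∣ ox u m := by
  intro hdvd
  exact Nat.find_min hL hm ⟨h1, hdvd⟩

lemma eP_dvd_iff (hL : ∃ m : ℕ, 1 ≤ m ∧ (p : ℤ) ∣ iterEval u m 0) (n : ℕ) :
    (p : ℤ) ∣ ox u n ↔ eP u p hL ∣ n := by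
  obtain ⟨he1, hed⟩ := eP_spec hL
  set e := eP u p hL with hE
  constructor
  · intro hn
    rcases Nat.eq_zero_or_pos n with rfl | hn1
    · exact Nat.dvd_zero e
    by_contra hnd
    -- n = q*e + r with 1 ≤ r < e
    have hr := Nat.mod_lt n (lt_of_lt_of_le Nat.zero_lt_one he1)
    have hrpos : 1 ≤ n % e := by
      rcases Nat.eq_zero_or_pos (n % e) with h0 | h1
      · exact absurd (Nat.dvd_iff_mod_eq_zero.2 h0) hnd
      · exact h1
    -- p ∣ x (n) and x n ≡ x (n%e)
    have : (p:ℤ) ∣ ox u (n % e + (n / e) * e) - ox u (n % e) := per_mul u hed _ _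
    rw [Nat.mod_add_div' n e] at this
    have : (p:ℤ) ∣ ox u (n % e) := by
      have := dvd_sub hn this
      simpa using this
    exact eP_min hL hrpos hr this
  · intro hn
    obtain ⟨k, rfl⟩ := hn
    rw [mul_comm]
    exact dvd_of_dvd_mul_e u hed k

/-- The collision lemma: if `p` divides `x_{n+k} - x_n` then `p ∣ x_k`. -/
lemma collision (u : Polynomial ℤ) (hL : LocallyNilpotentAt u 0)
    {p : ℕ} (hp : p.Prime) {n k : ℕ} (hn : 1 ≤ n)
    (h : (p : ℤ) ∣ ox u (n + k) - ox u n) : (p : ℤ) ∣ ox u k := by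
  have hL' := hL p hp
  set e := eP u p hL' with hE
  obtain ⟨he1, hed⟩ := eP_spec hL'
  -- x_{n+k+j} ≡ x_{n+j}; take j = n*e - n ≥ 0 so that n + j = n*e
  have hj : n ≤ n * e := Nat.le_mul_of_pos_right n (lt_of_lt_of_le Nat.zero_lt_one he1)
  have h2 := dvd_iter_sub u h (n * e - n)
  rw [← ox_add, ← ox_add] at h2
  have hx1 : n * e - n + (n + k) = n * e + k := by omega
  have hx2 : n * e - n + n = n * e := by omega
  rw [hx1, hx2] at h2
  have hne : (p:ℤ) ∣ ox u (n * e) := dvd_of_dvd_mul_e u hed n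
  have hnek : (p:ℤ) ∣ ox u (n * e + k) := by
    have := dvd_add h2 hne
    simpa using this
  have hdvd1 : e ∣ n * e + k := (eP_dvd_iff hL' _).1 hnek
  have : e ∣ k := (Nat.dvd_add_right (Dvd.intro_left n rfl)).1 hdvd1
  exact (eP_dvd_iff hL' k).2 this

end MinPeriod


lemma abs_sum_le_deg (g : Polynomial ℤ) {x : ℤ} (hx : 1 ≤ |x|) (n : ℕ) :
    |∑ i ∈ range n, g.coeff i * x ^ i| ≤ (∑ i ∈ range n, |g.coeff i|) * |x| ^ (n - 1) := by
  calc |∑ i ∈ range n, g.coeff i * x ^ i| ≤ ∑ i ∈ range n, |g.coeff i * x ^ i| :=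
        Finset.abs_sum_le_sum_abs _ _
    _ ≤ ∑ i ∈ range n, |g.coeff i| * |x| ^ (n - 1) := by
        apply Finset.sum_le_sum
        intro i hi
        have hi' := Finset.mem_range.mp hi
        rw [abs_mul, abs_pow]
        apply mul_le_mul_of_nonneg_left _ (abs_nonneg _)
        exact pow_le_pow_right₀ hx (by omega)
    _ = (∑ i ∈ range n, |g.coeff i|) * |x| ^ (n - 1) := by rw [Finset.sum_mul]

/-- Growth lemma: a polynomial of degree ≥ 2 eventually dominates `K * |x|`. -/
lemma growth (g : Polynomial ℤ) (hg : 2 ≤ g.natDegree) (K : ℤ) :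
    ∃ R : ℤ, 1 ≤ R ∧ ∀ x : ℤ, R ≤ |x| → K * |x| ≤ |g.eval x| := by
  set n := g.natDegree with hn
  set B : ℤ := ∑ i ∈ range n, |g.coeff i| with hB
  have hB0 : 0 ≤ B := Finset.sum_nonneg fun i _ => abs_nonneg _
  have hK0 : 0 ≤ |K| := abs_nonneg K
  refine ⟨B + |K| + 1, by omega, fun x hx => ?_⟩
  have hx1 : (1:ℤ) ≤ |x| := by omega
  have heval : g.eval x = (∑ i ∈ range n, g.coeff i * x ^ i) + g.coeff n * x ^ n := by
    rw [eval_eq_sum_range, Finset.sum_range_succ]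
  have hgne : g ≠ 0 := by
    intro h
    rw [hn, h] at hg
    simp at hg
  have hlead : (1:ℤ) ≤ |g.coeff n| := by
    have hne : g.coeff n ≠ 0 := by
      rw [hn, Polynomial.coeff_natDegree]
      exact Polynomial.leadingCoeff_ne_zero.mpr hgne
    exact Int.one_le_abs hne
  set S := ∑ i ∈ range n, g.coeff i * x ^ i with hS
  have htri : |g.coeff n * x ^ n| - |S| ≤ |g.eval x| := by
    have h1 : |g.coeff n * x ^ n| = |S + g.coeff n * x ^ n + (-S)| := by ring_nf
    have h2 : |S + g.coeff n * x ^ n + (-S)| ≤ |S + g.coeff n * x ^ n| + |S| := by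
      calc |S + g.coeff n * x ^ n + (-S)| ≤ |S + g.coeff n * x ^ n| + |(-S)| := abs_add_le _ _
        _ = |S + g.coeff n * x ^ n| + |S| := by rw [abs_neg]
    rw [heval]
    omega
  have hSb : |S| ≤ B * |x| ^ (n - 1) := abs_sum_le_deg g hx1 n
  have hpow : |x| ^ n = |x| ^ (n - 1) * |x| := by
    conv_lhs => rw [show n = (n-1) + 1 by omega]
    rw [pow_succ]
  have hpown : 0 ≤ |x| ^ (n - 1) * |x| := by positivity
  have hlead2 : |x| ^ (n-1) * |x| ≤ |g.coeff n * x ^ n| := by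
    rw [abs_mul, abs_pow, hpow]
    nlinarith
  have hpow1 : |x| ≤ |x| ^ (n - 1) := by
    calc |x| = |x| ^ 1 := (pow_one _).symm
      _ ≤ |x| ^ (n-1) := pow_le_pow_right₀ hx1 (by omega)
  have hxB : |K| + 1 ≤ |x| - B := by omega
  have hKx : K * |x| ≤ |x| ^ (n-1) * (|x| - B) := by
    have h1 : K * |x| ≤ |K| * |x| :=
      mul_le_mul_of_nonneg_right (le_abs_self K) (abs_nonneg x)
    have h2 : |K| * |x| ≤ (|x| - B) * |x| := by nlinarith
    have h3 : (|x| - B) * |x| ≤ (|x| - B) * |x| ^ (n-1) :=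
      mul_le_mul_of_nonneg_left hpow1 (by omega)
    nlinarith
  nlinarith [hSb, htri, hlead2]

variable {d : ℤ}

lemma y_dvd_pow (s : Solution₁ d) (k : ℕ) : s.y ∣ (s^k).y := by
  induction k with
  | zero => simp [Solution₁.y_one]
  | succ k ih =>
      rw [show s^(k+1) = s^k * s from pow_succ s k, Solution₁.y_mul]
      exact dvd_add (Dvd.dvd.mul_left (dvd_refl s.y) _) (Dvd.dvd.mul_right ih _)

lemma x_pow_cong (s : Solution₁ d) (k : ℕ) : s.y^2 ∣ (s^k).x - s.x^k := by
  induction k with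
  | zero => simp [Solution₁.x_one]
  | succ k ih =>
      rw [show s^(k+1) = s^k * s from pow_succ s k, Solution₁.x_mul]
      obtain ⟨A, hA⟩ := ih
      obtain ⟨B, hB⟩ := y_dvd_pow s k
      refine ⟨A * s.x + d * B, ?_⟩
      have h1 : (s^k).x = s.x^k + s.y^2 * A := by linarith
      rw [h1, hB]
      ring

lemma y_pow_cong (s : Solution₁ d) (k : ℕ) :
    s.y^3 ∣ (s^(k+1)).y - (k+1) * s.x^k * s.y := by
  induction k with
  | zero => simp [pow_one]
  | succ k ih =>
      rw [show s^(k+1+1) = s^(k+1) * s from pow_succ s (k+1), Solution₁.y_mul]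
      obtain ⟨A, hA⟩ := ih
      obtain ⟨B, hB⟩ := x_pow_cong s (k+1)
      have h1 : (s^(k+1)).y = (k+1) * s.x^k * s.y + s.y^3 * A := by linarith
      have h2 : (s^(k+1)).x = s.x^(k+1) + s.y^2 * B := by linarith
      refine ⟨A * s.x + B, ?_⟩
      rw [h1, h2]
      push_cast
      ring

/-- `(s^(k+1)).y = s.y * c` with `c ≡ (k+1) * s.x^k  mod s.y^2`. -/
lemma y_pow_fac (s : Solution₁ d) (k : ℕ) :
    ∃ c : ℤ, (s^(k+1)).y = s.y * c ∧ s.y^2 ∣ c - (k+1) * s.x^k := by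
  obtain ⟨A, hA⟩ := y_pow_cong s k
  exact ⟨(k+1) * s.x^k + s.y^2 * A, by linarith, ⟨A, by ring⟩⟩

lemma not_dvd_x {q : ℤ} (hq : Prime q) (s : Solution₁ d) (h : q ∣ s.y) : ¬ q ∣ s.x := by
  intro hx
  have h1 : q ∣ s.x^2 - d * s.y^2 :=
    dvd_sub (dvd_pow hx (by norm_num)) ((dvd_pow h (by norm_num)).mul_left d)
  rw [s.prop] at h1
  exact hq.not_dvd_one h1


lemma nat_exp_bound (C : ℕ) : ∃ Nb : ℕ, ∀ n : ℕ, Nb ≤ n → C * n < 2^(n-1) := by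
  refine ⟨2*C + 12, fun n hn => ?_⟩
  have hC : C + 1 ≤ 2^C := Nat.lt_two_pow_self (n := C)
  set m := n - C - 4 with hm
  have hm1 : m + 1 ≤ 2^m := Nat.lt_two_pow_self (n := m)
  have hsplit : 2^(n-1) = 2^(C+3) * 2^m := by
    rw [← pow_add]
    congr 1
    omega
  have h8 : 8 * (C+1) ≤ 2^(C+3) := by
    have : 2^(C+3) = 8 * 2^C := by ring
    omega
  have hmn : n ≤ 2 * (m+1) := by omega
  have key : 8 * (C+1) * (m+1) ≤ 2^(C+3) * 2^m :=
    Nat.mul_le_mul h8 hm1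
  have h4 : C * n < 8 * (C+1) * (m+1) := by nlinarith
  omega

lemma v_step_a {q : ℕ} (hq : q.Prime) (s : Solution₁ d) (hsy : (q:ℤ) ∣ s.y)
    {k : ℕ} (hk : 1 ≤ k) (hqk : ¬ q ∣ k) (hne : (s^k).y ≠ 0) :
    ((s^k).y).natAbs.factorization q = (s.y).natAbs.factorization q := by
  obtain ⟨k', rfl⟩ : ∃ k', k = k'+1 := ⟨k-1, by omega⟩
  obtain ⟨c, hc, hcong⟩ := y_pow_fac s k'
  have hyne : s.y ≠ 0 := fun h => hne (by rw [hc, h, zero_mul])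
  have hcne : c ≠ 0 := fun h => hne (by rw [hc, h, mul_zero])
  have hqZ : Prime (q:ℤ) := Nat.prime_iff_prime_int.mp hq
  have hqc : ¬ (q:ℤ) ∣ c := by
    intro hd
    have h3 : (q:ℤ) ∣ c - ((k' : ℤ)+1) * s.x^k' :=
      dvd_trans (dvd_pow hsy two_ne_zero) hcong
    have h4 : (q:ℤ) ∣ ((k' : ℤ)+1) * s.x^k' := by
      have := dvd_sub hd h3
      simpa using this
    rcases hqZ.dvd_mul.mp h4 with h | h
    · apply hqk
      have : (q:ℤ) ∣ ((k'+1 : ℕ) : ℤ) := by push_cast; exact h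
      exact_mod_cast this
    · exact not_dvd_x hqZ s hsy (hqZ.dvd_of_dvd_pow h)
  rw [hc, Int.natAbs_mul,
    Nat.factorization_mul (Int.natAbs_ne_zero.mpr hyne) (Int.natAbs_ne_zero.mpr hcne)]
  have h0 : (c.natAbs).factorization q = 0 := by
    apply Nat.factorization_eq_zero_of_not_dvd
    intro h
    exact hqc (Int.natCast_dvd.mpr h)
  simp [h0]

lemma v_step_b {q : ℕ} (hq : q.Prime) (s : Solution₁ d) (hsy : (q:ℤ) ∣ s.y)
    (hne : (s^q).y ≠ 0) :
    ((s^q).y).natAbs.factorization q = (s.y).natAbs.factorization q + 1 := by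
  obtain ⟨q', hq'⟩ : ∃ q', q = q'+1 := ⟨q-1, by have := hq.two_le; omega⟩
  have hq'1 : 1 ≤ q' := by have := hq.two_le; omega
  obtain ⟨c, hc, hcong⟩ := y_pow_fac s q'
  rw [← hq'] at hc
  have hyne : s.y ≠ 0 := fun h => hne (by rw [hc, h, zero_mul])
  have hcne : c ≠ 0 := fun h => hne (by rw [hc, h, mul_zero])
  have hqZ : Prime (q:ℤ) := Nat.prime_iff_prime_int.mp hq
  have hcast : ((q' : ℤ)+1) = (q : ℤ) := by rw [hq']; push_cast; ring
  rw [hcast] at hcong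
  -- q ∣ c
  have hqc : (q:ℤ) ∣ c := by
    have h3 : (q:ℤ) ∣ c - (q:ℤ) * s.x^q' :=
      dvd_trans (dvd_pow hsy two_ne_zero) hcong
    have h4 : (q:ℤ) ∣ (q:ℤ) * s.x^q' := Dvd.dvd.mul_right (dvd_refl _) _
    have := dvd_add h3 h4
    simpa using this
  -- ¬ q^2 ∣ c
  have hq2c : ¬ (q:ℤ)^2 ∣ c := by
    intro hd
    have hy2 : (q:ℤ)^2 ∣ s.y^2 := pow_dvd_pow_of_dvd hsy 2
    have h3 : (q:ℤ)^2 ∣ c - (q:ℤ) * s.x^q' := dvd_trans hy2 hcong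
    have h4 : (q:ℤ)^2 ∣ (q:ℤ) * s.x^q' := by
      have := dvd_sub hd h3
      simpa using this
    have h5 : (q:ℤ) ∣ s.x^q' := by
      rcases h4 with ⟨e, he⟩
      refine ⟨e, ?_⟩
      have hqne : (q:ℤ) ≠ 0 := by exact_mod_cast hq.ne_zero
      have : (q:ℤ) * s.x^q' = (q:ℤ) * ((q:ℤ) * e) := by rw [he]; ring
      exact mul_left_cancel₀ hqne this
    exact not_dvd_x hqZ s hsy (hqZ.dvd_of_dvd_pow h5)
  have hvc : (c.natAbs).factorization q = 1 := by
    have hcn : c.natAbs ≠ 0 := Int.natAbs_ne_zero.mpr hcne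
    have h1 : 1 ≤ (c.natAbs).factorization q := by
      rw [← (Nat.Prime.pow_dvd_iff_le_factorization hq hcn)]
      rw [pow_one]
      rw [← Int.natCast_dvd]
      exact hqc
    have h2 : ¬ 2 ≤ (c.natAbs).factorization q := by
      rw [← (Nat.Prime.pow_dvd_iff_le_factorization hq hcn)]
      intro h
      apply hq2c
      have : ((q^2 : ℕ) : ℤ) ∣ c := Int.natCast_dvd.mpr h
      push_cast at this
      exact this
    omega
  rw [hc, Int.natAbs_mul,
    Nat.factorization_mul (Int.natAbs_ne_zero.mpr hyne) (Int.natAbs_ne_zero.mpr hcne)]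
  simp [hvc]

lemma prod_pow_factorization_dvd (T : Finset ℕ) {n : ℕ} (hn : n ≠ 0) :
    (∏ q ∈ T, q ^ n.factorization q) ∣ n := by
  have h1 : ∏ q ∈ T, q ^ n.factorization q
      = ∏ q ∈ T ∩ n.primeFactors, q ^ n.factorization q := by
    apply (Finset.prod_subset (Finset.inter_subset_left) _).symm
    intro q hqT hqn
    have : q ∉ n.primeFactors := fun h => hqn (Finset.mem_inter.mpr ⟨hqT, h⟩)
    rw [← Nat.support_factorization, Finsupp.notMem_support_iff] at this
    rw [this, pow_zero]
  rw [h1]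
  have h2 : (∏ q ∈ T ∩ n.primeFactors, q ^ n.factorization q)
      ∣ ∏ q ∈ n.primeFactors, q ^ n.factorization q :=
    Finset.prod_dvd_prod_of_subset _ _ _ (Finset.inter_subset_right)
  have h3 : ∏ q ∈ n.primeFactors, q ^ n.factorization q = n := by
    rw [← Nat.support_factorization]
    exact Nat.factorization_prod_pow_eq_self hn
  rwa [h3] at h2

section Fundamental

variable {a : Solution₁ d} (ha : Pell.IsFundamental a)

include ha

lemma ypos (n : ℕ) (hn : 1 ≤ n) : 0 < (a^n).y := by
  obtain ⟨m, rfl⟩ : ∃ m, n = m + 1 := ⟨n-1, by omega⟩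
  exact Solution₁.y_pow_succ_pos (lt_trans zero_lt_one ha.1) ha.2.1 m

lemma lte_full {q : ℕ} (hq : q.Prime) :
    ∀ k, 1 ≤ k → ∀ m, 1 ≤ m → (q:ℤ) ∣ (a^m).y →
    ((a^(m*k)).y).natAbs.factorization q
      = ((a^m).y).natAbs.factorization q + k.factorization q := by
  intro k
  induction k using Nat.strong_induction_on with
  | _ k IH =>
    intro hk m hm hdvd
    by_cases hqk : q ∣ k
    · obtain ⟨k', rfl⟩ := hqk
      have hq2 := hq.two_le
      have hk'1 : 1 ≤ k' := by
        rcases Nat.eq_zero_or_pos k' with rfl | h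
        · omega
        · exact h
      have hk'lt : k' < q * k' := by
        have : 1 * k' < q * k' := by
          apply Nat.mul_lt_mul_of_lt_of_le (by omega) (le_refl k') (by omega)
        omega
      have hdvd2 : (q:ℤ) ∣ (a^(m*q)).y := by
        rw [pow_mul]
        exact dvd_trans hdvd (y_dvd_pow (a^m) q)
      have hstep : ((a^(m*q)).y).natAbs.factorization q
          = ((a^m).y).natAbs.factorization q + 1 := by
        have := v_step_b hq (a^m) hdvd (by
          rw [← pow_mul]
          exact (ypos ha (m*q) (Nat.mul_pos (by omega) (by omega))).ne')
        rwa [← pow_mul] at this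
      have hIH := IH k' hk'lt hk'1 (m*q) (Nat.mul_pos (by omega) (by omega)) hdvd2
      rw [show m * (q * k') = (m * q) * k' by ring, hIH, hstep]
      have hkf : (q * k').factorization q = 1 + k'.factorization q := by
        rw [Nat.factorization_mul (by omega) (by omega)]
        simp [Nat.Prime.factorization_self hq]
      rw [hkf]
      omega
    · have := v_step_a hq (a^m) hdvd hk hqk (by
        rw [← pow_mul]
        exact (ypos ha (m*k) (Nat.mul_pos (by omega) (by omega))).ne')
      rw [← pow_mul] at this
      rw [this, Nat.factorization_eq_zero_of_not_dvd hqk]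
      omega

lemma rank_dvd {q : ℕ} (hq : q.Prime)
    (hex : ∃ m, 1 ≤ m ∧ (q:ℤ) ∣ (a^m).y) :
    ∀ n, 1 ≤ n → (q:ℤ) ∣ (a^n).y → Nat.find hex ∣ n := by
  intro n hn hdvd
  set α := Nat.find hex with hα
  obtain ⟨hα1, hαd⟩ := Nat.find_spec hex
  set r := n % α with hr
  set k := n / α with hk
  have hqZ : Prime (q:ℤ) := Nat.prime_iff_prime_int.mp hq
  have hdl : (q:ℤ) ∣ (a^(α*k)).y := by
    rw [pow_mul]
    exact dvd_trans hαd (y_dvd_pow (a^α) k)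
  have hsplit : a^n = a^(α*k) * a^r := by
    rw [← pow_add]
    congr 1
    simp only [hk, hr]
    exact (Nat.div_add_mod n α).symm
  rw [hsplit, Solution₁.y_mul] at hdvd
  have hxy : (q:ℤ) ∣ (a^(α*k)).x * (a^r).y := by
    have h2 : (q:ℤ) ∣ (a^(α*k)).y * (a^r).x := Dvd.dvd.mul_right hdl _
    have := dvd_sub hdvd h2
    simpa using this
  have hry : (q:ℤ) ∣ (a^r).y := by
    rcases hqZ.dvd_mul.mp hxy with h | h
    · exact absurd h (not_dvd_x hqZ (a^(α*k)) hdl)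
    · exact h
  rcases Nat.eq_zero_or_pos r with h0 | hpos
  · rw [hr] at h0
    exact Nat.dvd_of_mod_eq_zero h0
  · exfalso
    have hrlt : r < α := Nat.mod_lt n (by omega)
    exact Nat.find_min hex hrlt ⟨hpos, hry⟩

lemma per_prime_bound (q : ℕ) :
    ∃ C : ℕ, q.Prime → ∀ n, 1 ≤ n →
      ((a^n).y).natAbs.factorization q ≤ C + n.factorization q := by
  by_cases hq : q.Prime
  swap
  · exact ⟨0, fun h => absurd h hq⟩
  by_cases hex : ∃ m, 1 ≤ m ∧ (q:ℤ) ∣ (a^m).y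
  · refine ⟨((a^(Nat.find hex)).y).natAbs.factorization q, fun _ n hn => ?_⟩
    by_cases hdvd : (q:ℤ) ∣ (a^n).y
    · obtain ⟨k, hk⟩ := rank_dvd ha hq hex n hn hdvd
      set α := Nat.find hex with hα
      obtain ⟨hα1, hαd⟩ := Nat.find_spec hex
      have hk1 : 1 ≤ k := by
        rcases Nat.eq_zero_or_pos k with rfl | h
        · omega
        · exact h
      have heq : (a^n) = (a^(α*k)) := by rw [← hk]
      rw [heq, lte_full ha hq k hk1 α hα1 hαd]
      have hvn : k.factorization q ≤ n.factorization q := by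
        conv_rhs => rw [hk]
        rw [Nat.factorization_mul (by omega) (by omega)]
        simp
      omega
    · rw [Nat.factorization_eq_zero_of_not_dvd (fun h => hdvd (Int.natCast_dvd.mpr h))]
      omega
  · refine ⟨0, fun _ n hn => ?_⟩
    rw [Nat.factorization_eq_zero_of_not_dvd (fun h => hex ⟨n, hn, Int.natCast_dvd.mpr h⟩)]
    omega

lemma y_growth : ∀ n, 1 ≤ n → (2:ℤ)^(n-1) ≤ (a^n).y := by
  intro n
  induction n with
  | zero => omega
  | succ n IH =>
      intro _
      rcases Nat.eq_zero_or_pos n with rfl | hn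
      · simpa using (show (1:ℤ) ≤ a.y from ha.2.1)
      have h1 := IH hn
      rw [show a^(n+1) = a^n * a from pow_succ a n, Solution₁.y_mul]
      have hx2 : 2 ≤ a.x := ha.1
      have hy1 : 1 ≤ a.y := ha.2.1
      have hxp : 0 < (a^n).x := Solution₁.x_pow_pos (by linarith [ha.1]) n
      have hyp : 0 < (a^n).y := ypos ha n hn
      have : (2:ℤ)^(n+1-1) = 2 * 2^(n-1) := by
        rw [← pow_succ']
        congr 1
        omega
      rw [this]
      nlinarith

lemma pell_smooth_bound (S' : Finset ℕ) (hS' : ∀ q ∈ S', q.Prime) :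
    ∃ N : ℕ, ∀ n, 1 ≤ n →
      (∀ q : ℕ, q.Prime → (q:ℤ) ∣ (a^n).y → q ∈ S') → n ≤ N := by
  have hchoice : ∀ q : ℕ, ∃ C : ℕ, q.Prime → ∀ n, 1 ≤ n →
      ((a^n).y).natAbs.factorization q ≤ C + n.factorization q :=
    fun q => per_prime_bound ha q
  choose C0 hC0 using hchoice
  set Cstar := ∏ q ∈ S', q ^ C0 q with hCs
  obtain ⟨Nb, hNb⟩ := nat_exp_bound Cstar
  refine ⟨Nb, fun n hn hsmooth => ?_⟩
  by_contra hlt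
  push_neg at hlt
  set Y := ((a^n).y).natAbs with hY
  have hYpos : 0 < Y := by
    rw [hY]
    simpa [Int.natAbs_pos] using (ypos ha n hn).ne'
  have hpf : Y.primeFactors ⊆ S' := by
    intro q hqm
    have hqp := Nat.prime_of_mem_primeFactors hqm
    have hqd : q ∣ Y := Nat.dvd_of_mem_primeFactors hqm
    exact hsmooth q hqp (Int.natCast_dvd.mpr hqd)
  have h1 : Y = ∏ q ∈ Y.primeFactors, q ^ Y.factorization q := by
    rw [← Nat.support_factorization]
    exact (Nat.factorization_prod_pow_eq_self hYpos.ne').symm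
  have h2 : Y = ∏ q ∈ S', q ^ Y.factorization q := by
    conv_lhs => rw [h1]
    apply Finset.prod_subset hpf
    intro q hq hqn
    rw [← Nat.support_factorization, Finsupp.notMem_support_iff] at hqn
    rw [hqn, pow_zero]
  have h3 : Y ≤ ∏ q ∈ S', q ^ (C0 q + n.factorization q) := by
    rw [h2]
    apply Finset.prod_le_prod'
    intro q hq
    exact Nat.pow_le_pow_right (hS' q hq).pos (hC0 q (hS' q hq) n hn)
  have h4 : ∏ q ∈ S', q ^ (C0 q + n.factorization q)
      = Cstar * ∏ q ∈ S', q ^ n.factorization q := by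
    rw [hCs, ← Finset.prod_mul_distrib]
    apply Finset.prod_congr rfl
    intro q _
    rw [pow_add]
  have h5 : (∏ q ∈ S', q ^ n.factorization q) ≤ n :=
    Nat.le_of_dvd (by omega) (prod_pow_factorization_dvd S' (by omega))
  have h6 : Y ≤ Cstar * n := by
    calc Y ≤ Cstar * ∏ q ∈ S', q ^ n.factorization q := by rw [← h4]; exact h3
      _ ≤ Cstar * n := Nat.mul_le_mul_left _ h5
  have h7 : 2^(n-1) ≤ Y := by
    have hg := y_growth ha n hn
    have : ((2^(n-1) : ℕ) : ℤ) ≤ (a^n).y := by push_cast; exact hg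
    have h8 : ((2^(n-1) : ℕ) : ℤ) ≤ (Y : ℤ) := by
      rwa [hY, Int.natAbs_of_nonneg (le_of_lt (ypos ha n hn))] 
    exact_mod_cast h8
  have := hNb n (by omega)
  omega

end Fundamental

/-- Størmer's theorem, ℕ version. -/
theorem stormer_nat (S : Finset ℕ) (hS : ∀ p ∈ S, p.Prime) :
    ∃ B : ℕ, ∀ t : ℕ, 0 < t →
      (∀ p : ℕ, p.Prime → p ∣ t → p ∈ S) →
      (∀ p : ℕ, p.Prime → p ∣ (t+1) → p ∈ S) → t ≤ B := by
  classical
  set P := ∏ p ∈ S, p with hP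
  have hP0 : P ≠ 0 := by
    rw [hP]
    exact Finset.prod_ne_zero_iff.mpr (fun p hp => (hS p hp).ne_zero)
  -- per-D bound
  have hD : ∀ D : ℕ, ∃ BD : ℕ, 2 ≤ D → Squarefree D → ∀ t w : ℕ, 0 < t →
      (∀ p : ℕ, p.Prime → p ∣ t → p ∈ S) →
      (∀ p : ℕ, p.Prime → p ∣ (t+1) → p ∈ S) →
      t * (t+1) = D * w^2 → t ≤ BD := by
    intro D
    by_cases hD2 : 2 ≤ D ∧ Squarefree D
    swap
    · refine ⟨0, fun h1 h2 => absurd ⟨h1, h2⟩ hD2⟩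
    obtain ⟨hD2', hsqf⟩ := hD2
    have hpos : (0:ℤ) < (D:ℤ) := by exact_mod_cast (by omega : 0 < D)
    have hnonsq : ¬ IsSquare ((D:ℤ)) := by
      rintro ⟨k, hk⟩
      have h1 : D = k.natAbs * k.natAbs := by
        have : ((D:ℤ)).natAbs = (k * k).natAbs := by rw [hk]
        simpa [Int.natAbs_mul] using this
      have h2 : IsUnit k.natAbs := hsqf k.natAbs ⟨1, by rw [h1]; ring⟩
      rw [Nat.isUnit_iff] at h2
      rw [h2] at h1
      omega
    obtain ⟨a, ha⟩ := Pell.IsFundamental.exists_of_not_isSquare hpos hnonsq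
    have hS' : ∀ q ∈ insert 2 S, q.Prime := by
      intro q hq
      rcases Finset.mem_insert.mp hq with rfl | h
      · exact Nat.prime_two
      · exact hS q h
    obtain ⟨N, hN⟩ := pell_smooth_bound ha (insert 2 S) hS'
    refine ⟨Finset.sup (Finset.range (N+1)) (fun n => ((a^n).x).toNat),
      fun _ _ t w ht hst hst1 heq => ?_⟩
    have hw : 0 < w := by
      rcases Nat.eq_zero_or_pos w with rfl | h
      · simp at heq; omega
      · exact h
    have hz : ((t:ℤ)) * ((t:ℤ)+1) = (D:ℤ) * (w:ℤ)^2 := by exact_mod_cast heq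
    have hprop : ((2*(t:ℤ)+1))^2 - (D:ℤ) * (2*(w:ℤ))^2 = 1 := by linear_combination 4 * hz
    set s : Solution₁ (D:ℤ) := Solution₁.mk (2*(t:ℤ)+1) (2*(w:ℤ)) hprop with hs
    have hsx : 0 < s.x := by rw [hs, Solution₁.x_mk]; positivity
    have hsy : 0 < s.y := by
      rw [hs, Solution₁.y_mk]
      have : (0:ℤ) < (w:ℤ) := by exact_mod_cast hw
      linarith
    obtain ⟨n, hn⟩ := ha.eq_pow_of_nonneg hsx (le_of_lt hsy)
    have hn1 : 1 ≤ n := by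
      rcases Nat.eq_zero_or_pos n with rfl | h
      · rw [pow_zero] at hn
        rw [hn] at hsy
        simp [Solution₁.y_one] at hsy
      · exact h
    have hsmooth : ∀ q : ℕ, q.Prime → (q:ℤ) ∣ (a^n).y → q ∈ insert 2 S := by
      intro q hq hqd
      rw [← hn, hs, Solution₁.y_mk] at hqd
      have h2w : q ∣ 2 * w := by
        have : (q:ℤ) ∣ ((2*w : ℕ) : ℤ) := by push_cast; exact hqd
        exact_mod_cast this
      rcases (Nat.Prime.dvd_mul hq).mp h2w with h | h
      · exact Finset.mem_insert.mpr (Or.inl ((Nat.prime_dvd_prime_iff_eq hq Nat.prime_two).mp h))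
      · apply Finset.mem_insert.mpr
        right
        have hqt : q ∣ t * (t+1) := by
          rw [heq]
          exact Dvd.dvd.mul_left (dvd_trans (dvd_pow h (by norm_num)) (dvd_refl _)) D
        rcases (Nat.Prime.dvd_mul hq).mp hqt with h' | h'
        · exact hst q hq h'
        · exact hst1 q hq h'
    have hnN : n ≤ N := hN n hn1 hsmooth
    have hx : (a^n).x = 2*(t:ℤ)+1 := by rw [← hn, hs, Solution₁.x_mk]
    have : ((a^n).x).toNat = 2*t+1 := by rw [hx]; omega
    have hmem : n ∈ Finset.range (N+1) := Finset.mem_range.mpr (by omega)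
    have hle : ((a^n).x).toNat ≤ Finset.sup (Finset.range (N+1)) (fun n => ((a^n).x).toNat) :=
      Finset.le_sup (f := fun n => ((a^n).x).toNat) hmem
    omega
  choose BD hBD using hD
  refine ⟨Finset.sup P.divisors BD, fun t ht hst hst1 => ?_⟩
  obtain ⟨D, w, hDw, hsqf⟩ := Nat.sq_mul_squarefree (t * (t+1))
  -- t*(t+1) = D * w^2
  have heq : t * (t+1) = D * w^2 := hDw.symm.trans (mul_comm _ _)
  have hD0 : D ≠ 0 := by
    intro h
    rw [h] at heq
    simp at heq
    omega
  by_cases hD1 : D = 1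
  · exfalso
    rw [hD1, one_mul] at heq
    have hcop : IsCoprime ((t:ℤ)) ((t:ℤ)+1) := ⟨-1, 1, by ring⟩
    have hz : ((t:ℤ)) * ((t:ℤ)+1) = ((w:ℤ))^2 := by exact_mod_cast heq
    obtain ⟨r, hr⟩ := Int.sq_of_isCoprime hcop hz
    have hrnn : (0:ℤ) ≤ (t:ℤ) := by positivity
    have htr : (t:ℤ) = r^2 := by
      rcases hr with h | h
      · exact h
      · exfalso
        have h1 : (1:ℤ) ≤ (t:ℤ) := by exact_mod_cast ht
        nlinarith
    -- t+1 is also a square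
    have hcop2 : IsCoprime ((t:ℤ)+1) ((t:ℤ)) := hcop.symm
    have hz2 : ((t:ℤ)+1) * ((t:ℤ)) = ((w:ℤ))^2 := by linarith [hz]
    obtain ⟨r2, hr2⟩ := Int.sq_of_isCoprime (c := (w:ℤ)) hcop2 (by linear_combination hz)
    have htr2 : (t:ℤ)+1 = r2^2 := by
      rcases hr2 with h | h
      · exact h
      · exfalso
        have h1 : (1:ℤ) ≤ (t:ℤ) := by exact_mod_cast ht
        nlinarith
    -- two consecutive positive squares: impossible
    have h1 : (1:ℤ) ≤ (t:ℤ) := by exact_mod_cast ht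
    have hr0 : r ≠ 0 := by
      intro h
      rw [h] at htr
      simp at htr
      omega
    have hr1 : 1 ≤ |r| := Int.one_le_abs hr0
    have hsq : |r|^2 + 1 = |r2|^2 := by
      rw [sq_abs, sq_abs]
      linarith
    have hlt : |r| < |r2| := by nlinarith [abs_nonneg r, abs_nonneg r2]
    have hle2 : |r| + 1 ≤ |r2| := by omega
    nlinarith [abs_nonneg r, sq_nonneg (|r| + 1 - |r2|)]
  · have hD2 : 2 ≤ D := by omega
    have hDdvd : D ∣ P := by
      have h1 : D.primeFactors ⊆ S := by
        intro q hq
        have hqp := Nat.prime_of_mem_primeFactors hq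
        have hqd : q ∣ t * (t + 1) := dvd_trans (Nat.dvd_of_mem_primeFactors hq) ⟨w^2, heq⟩
        rcases (Nat.Prime.dvd_mul hqp).mp hqd with h | h
        · exact hst q hqp h
        · exact hst1 q hqp h
      calc D = ∏ q ∈ D.primeFactors, q := (Nat.prod_primeFactors_of_squarefree hsqf).symm
        _ ∣ ∏ q ∈ S, q := Finset.prod_dvd_prod_of_subset _ _ _ h1
    have hmem : D ∈ P.divisors := Nat.mem_divisors.mpr ⟨hDdvd, hP0⟩
    calc t ≤ BD D := hBD D hD2 hsqf t w ht hst hst1 heq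
      _ ≤ Finset.sup P.divisors BD := Finset.le_sup hmem

/-- Størmer's theorem, ℤ version. -/
theorem stormer_int (S : Finset ℕ) (hS : ∀ p ∈ S, p.Prime) :
    ∃ B : ℤ, ∀ A : ℤ, A ≠ 0 → A + 1 ≠ 0 →
      (∀ p : ℕ, p.Prime → (p:ℤ) ∣ A → p ∈ S) →
      (∀ p : ℕ, p.Prime → (p:ℤ) ∣ (A+1) → p ∈ S) → |A| ≤ B := by
  obtain ⟨Bn, hBn⟩ := stormer_nat S hS
  refine ⟨(Bn:ℤ) + 1, fun A hA0 hA1 hsA hsA1 => ?_⟩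
  rcases lt_trichotomy A 0 with hneg | hzero | hpos
  · -- A ≤ -1; A ≠ -1 since A+1 ≠ 0, so A ≤ -2
    have hA2 : A ≤ -2 := by
      rcases eq_or_lt_of_le (show A ≤ -1 by omega) with h | h
      · exact absurd (by omega : A + 1 = 0) hA1
      · omega
    set t : ℕ := (-(A+1)).toNat with htdef
    have htz : ((t:ℤ)) = -(A+1) := by omega
    have ht1 : ((t:ℤ)) + 1 = -A := by omega
    have htpos : 0 < t := by omega
    have h1 : ∀ p : ℕ, p.Prime → p ∣ t → p ∈ S := by
      intro p hp hd
      apply hsA1 p hp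
      have : (p:ℤ) ∣ ((t:ℕ):ℤ) := Int.natCast_dvd_natCast.mpr hd
      rw [htz] at this
      exact (dvd_neg).mp this
    have h2 : ∀ p : ℕ, p.Prime → p ∣ (t+1) → p ∈ S := by
      intro p hp hd
      apply hsA p hp
      have : (p:ℤ) ∣ (((t+1):ℕ):ℤ) := Int.natCast_dvd_natCast.mpr hd
      push_cast at this
      rw [ht1] at this
      exact (dvd_neg).mp this
    have := hBn t htpos h1 h2
    have habs : |A| = -A := abs_of_neg hneg
    omega
  · exact absurd hzero hA0
  · set t : ℕ := A.toNat with htdef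
    have htz : ((t:ℤ)) = A := by omega
    have htpos : 0 < t := by omega
    have h1 : ∀ p : ℕ, p.Prime → p ∣ t → p ∈ S := by
      intro p hp hd
      apply hsA p hp
      have : (p:ℤ) ∣ ((t:ℕ):ℤ) := Int.natCast_dvd_natCast.mpr hd
      rwa [htz] at this
    have h2 : ∀ p : ℕ, p.Prime → p ∣ (t+1) → p ∈ S := by
      intro p hp hd
      apply hsA1 p hp
      have : (p:ℤ) ∣ (((t+1):ℕ):ℤ) := Int.natCast_dvd_natCast.mpr hd
      push_cast at this
      rw [htz] at this
      exact this
    have := hBn t htpos h1 h2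
    have habs : |A| = A := abs_of_pos hpos
    omega



lemma eval_linear (a b t : ℤ) : eval t (C a * X + C b) = a * t + b := by simp

lemma ox_linear (a b : ℤ) (m : ℕ) :
    ox (C a * X + C b) m = b * (∑ i ∈ range m, a ^ i) := by
  induction m with
  | zero => simp [ox_zero]
  | succ m ih =>
      rw [ox_succ, ih, eval_linear, geom_sum_succ]
      ring

lemma fermat_int {p : ℕ} (hp : p.Prime) {a : ℤ} (ha : ¬ (p:ℤ) ∣ a) :
    (p:ℤ) ∣ a ^ (p - 1) - 1 := by
  haveI : Fact p.Prime := ⟨hp⟩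
  rw [← ZMod.intCast_zmod_eq_zero_iff_dvd]
  push_cast
  rw [sub_eq_zero]
  have h0 : (a : ZMod p) ≠ 0 := by
    rw [Ne, ZMod.intCast_zmod_eq_zero_iff_dvd]
    exact ha
  exact ZMod.pow_card_sub_one_eq_one h0

lemma geom_sum_ne_zero_of_prime_dvd {a : ℤ} {q : ℕ} (hq : q.Prime) (hqa : (q:ℤ) ∣ a)
    {m : ℕ} (hm : 1 ≤ m) : (∑ i ∈ range m, a ^ i) ≠ 0 := by
  obtain ⟨n, rfl⟩ : ∃ n, m = n + 1 := ⟨m - 1, by omega⟩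
  rw [geom_sum_succ]
  intro h
  have : (q:ℤ) ∣ 1 := by
    have h1 : a * ∑ i ∈ range n, a ^ i = -1 := by linarith
    have : (q:ℤ) ∣ a * ∑ i ∈ range n, a ^ i := Dvd.dvd.mul_right hqa _
    rw [h1] at this
    exact (dvd_neg).mp this
  have := Int.le_of_dvd one_pos this
  have := hq.two_le
  omega

/-- Backward direction, case 2. -/
lemma backward2 (a b : ℤ) (hb : b ≠ 0)
    (hq : ∃ q : ℕ, Nat.Prime q ∧ (q:ℤ) ∣ a)
    (hcond : ∀ p : ℕ, Nat.Prime p → (p:ℤ) ∣ a → (p:ℤ) ∣ b) :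
    LocallyNilpotentAt (C a * X + C b) 0 ∧ ¬ IsNilpotentAt (C a * X + C b) 0 := by
  obtain ⟨q, hqp, hqa⟩ := hq
  constructor
  · intro p hp
    by_cases hpa : (p:ℤ) ∣ a
    · exact ⟨1, le_refl 1, by
        show (p:ℤ) ∣ ox _ 1
        rw [ox_linear]
        simpa using hcond p hp hpa⟩
    by_cases hpa1 : (p:ℤ) ∣ a - 1
    · refine ⟨p, hp.one_lt.le.trans (le_refl _) |>.trans (le_refl _), ?_⟩
      show (p:ℤ) ∣ ox _ p
      rw [ox_linear]
      apply Dvd.dvd.mul_left _ b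
      -- p ∣ S_p since S_p ≡ p ≡ 0 mod (p)
      have h1 : (a - 1) ∣ (∑ i ∈ range p, a ^ i) - p := by
        have : (∑ i ∈ range p, a ^ i) - (p:ℤ) = ∑ i ∈ range p, (a ^ i - 1) := by
          rw [Finset.sum_sub_distrib]
          simp
        rw [this]
        apply Finset.dvd_sum
        intro i _
        exact ⟨∑ j ∈ range i, a ^ j, by rw [← geom_sum_mul]; ring⟩
      have h2 : (p:ℤ) ∣ (∑ i ∈ range p, a ^ i) - p := dvd_trans hpa1 h1
      have h3 : (p:ℤ) ∣ (p:ℤ) := dvd_refl _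
      have := dvd_add h2 h3
      simpa using this
    · refine ⟨p - 1, by have := hp.two_le; omega, ?_⟩
      show (p:ℤ) ∣ ox _ (p-1)
      rw [ox_linear]
      apply Dvd.dvd.mul_left _ b
      have hf : (p:ℤ) ∣ (∑ i ∈ range (p-1), a ^ i) * (a - 1) := by
        rw [geom_sum_mul]
        exact fermat_int hp hpa
      have hpZ : Prime (p:ℤ) := Nat.prime_iff_prime_int.mp hp
      rcases hpZ.dvd_mul.mp hf with h | h
      · exact h
      · exact absurd h hpa1
  · rintro ⟨n, hn1, hn⟩
    have : ox (C a * X + C b) n = 0 := hn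
    rw [ox_linear] at this
    rcases mul_eq_zero.mp this with h | h
    · exact hb h
    · exact geom_sum_ne_zero_of_prime_dvd hqp hqa hn1 h

/-- Backward direction, case 1: translation. -/
lemma backward1 (b : ℤ) (hb : b ≠ 0) :
    LocallyNilpotentAt (X + C b) 0 ∧ ¬ IsNilpotentAt (X + C b) 0 := by
  have hform : (X + C b : Polynomial ℤ) = C 1 * X + C b := by rw [map_one, one_mul]
  rw [hform]
  constructor
  · intro p hp
    refine ⟨p, hp.two_le.trans' (by omega), ?_⟩
    show (p:ℤ) ∣ ox _ p
    rw [ox_linear]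
    simp only [one_pow, Finset.sum_const, Finset.card_range, nsmul_eq_mul, mul_one]
    exact Dvd.dvd.mul_left (dvd_refl _) b
  · rintro ⟨n, hn1, hn⟩
    have : ox (C 1 * X + C b) n = 0 := hn
    rw [ox_linear] at this
    simp only [one_pow, Finset.sum_const, Finset.card_range, nsmul_eq_mul, mul_one] at this
    rcases mul_eq_zero.mp this with h | h
    · exact hb h
    · have : (n:ℤ) ≠ 0 := Int.natCast_ne_zero.mpr (by omega)
      exact this h

/-- Forward direction in the linear case. -/
lemma forward_linear (u : Polynomial ℤ) (hdeg : u.natDegree = 1)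
    (hL : LocallyNilpotentAt u 0) (hN : ¬ IsNilpotentAt u 0) :
    ((∃ b : ℤ, b ≠ 0 ∧ u = X + C b) ∨
     (∃ a b : ℤ, b ≠ 0 ∧ (∃ p : ℕ, Nat.Prime p ∧ (p : ℤ) ∣ a) ∧
        (∀ p : ℕ, Nat.Prime p → (p : ℤ) ∣ a → (p : ℤ) ∣ b) ∧ u = C a * X + C b)) := by
  have hform : u = C (u.coeff 1) * X + C (u.coeff 0) :=
    eq_X_add_C_of_natDegree_le_one (le_of_eq hdeg)
  set a := u.coeff 1 with ha
  set b := u.coeff 0 with hbb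
  have ha0 : a ≠ 0 := by
    rw [ha, ← hdeg]
    rw [Polynomial.coeff_natDegree]
    exact Polynomial.leadingCoeff_ne_zero.mpr (fun h => by simp [h] at hdeg)
  have hb0 : b ≠ 0 := by
    intro h
    apply hN
    refine ⟨1, le_refl _, ?_⟩
    show ox u 1 = 0
    rw [hform, ox_linear, h]
    simp
  by_cases ha1 : a = 1
  · left
    exact ⟨b, hb0, by rw [hform, ha1, map_one, one_mul]⟩
  by_cases ham1 : a = -1
  · exfalso
    apply hN
    refine ⟨2, by omega, ?_⟩
    show ox u 2 = 0
    rw [hform, ox_linear, ham1]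
    norm_num [Finset.sum_range_succ]
  · right
    refine ⟨a, b, hb0, ?_, ?_, hform⟩
    · -- a has a prime factor
      have hna : a.natAbs ≠ 1 := by
        intro h
        rcases Int.natAbs_eq_iff.mp h with h1 | h1 <;> simp [h1] at ha1 ham1 <;> omega
      obtain ⟨p, hp, hpa⟩ := Int.exists_prime_and_dvd hna
      refine ⟨p.natAbs, Int.prime_iff_natAbs_prime.mp hp, ?_⟩
      rwa [Int.natAbs_dvd]
    · intro p hp hpa
      obtain ⟨m, hm1, hmd⟩ := hL p hp
      have hmd' : (p:ℤ) ∣ ox u m := hmd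
      rw [hform, ox_linear] at hmd'
      have hpZ : Prime (p:ℤ) := Nat.prime_iff_prime_int.mp hp
      rcases hpZ.dvd_mul.mp hmd' with h | h
      · exact h
      · exfalso
        obtain ⟨n, rfl⟩ : ∃ n, m = n + 1 := ⟨m - 1, by omega⟩
        rw [geom_sum_succ] at h
        have h1 : (p:ℤ) ∣ a * ∑ i ∈ range n, a ^ i := Dvd.dvd.mul_right hpa _
        have : (p:ℤ) ∣ 1 := by
          have := dvd_sub h h1
          simpa using this
        have := Int.le_of_dvd one_pos this
        have := hp.two_le
        omega


lemma abs_sub_le' (a b : ℤ) : |a - b| ≤ |a| + |b| := by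
  have h := abs_add_le a (-b)
  simpa [sub_eq_add_neg] using h

lemma orbit_periodic (u : Polynomial ℤ) {i j : ℕ} (hij : ox u i = ox u j) :
    ∀ s, ox u (s + j) = ox u (s + i) := by
  intro s
  rw [ox_add, ox_add, hij]

lemma orbit_mem (u : Polynomial ℤ) {i j : ℕ} (hlt : i < j) (hij : ox u i = ox u j) :
    ∀ k, ∃ m, m ≤ j ∧ ox u k = ox u m := by
  intro k
  induction k using Nat.strong_induction_on with
  | _ k IH =>
    by_cases hk : k ≤ j
    · exact ⟨k, hk, rfl⟩
    · push_neg at hk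
      have hs : k - (j - i) < k := by omega
      obtain ⟨m, hm1, hm2⟩ := IH (k - (j - i)) hs
      refine ⟨m, hm1, ?_⟩
      have hper : ox u k = ox u (k - (j - i)) := by
        have h := orbit_periodic u hij (k - j)
        rw [show k - j + j = k by omega, show k - j + i = k - (j - i) by omega] at h
        exact h
      rw [hper, hm2]

lemma no_collision (u : Polynomial ℤ) (hL : LocallyNilpotentAt u 0)
    (hN : ¬ IsNilpotentAt u 0)
    {i j : ℕ} (h1 : 1 ≤ i) (hlt : i < j) (hij : ox u i = ox u j) : False := by
  set M := Finset.sup (Finset.range (j+1)) (fun m => (ox u m).natAbs) with hM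
  obtain ⟨p, hpM, hp⟩ := Nat.exists_infinite_primes (M + 1)
  obtain ⟨m, hm1, hmd⟩ := hL p hp
  have hmd' : (p:ℤ) ∣ ox u m := hmd
  have hmne : ox u m ≠ 0 := fun h => hN ⟨m, hm1, h⟩
  obtain ⟨m', hm'le, hm'eq⟩ := orbit_mem u hlt hij m
  have hb : (ox u m).natAbs ≤ M := by
    rw [hm'eq]
    exact Finset.le_sup (f := fun m => (ox u m).natAbs) (Finset.mem_range.mpr (by omega))
  have hple : (p:ℤ) ≤ |ox u m| := Int.le_of_dvd (abs_pos.mpr hmne) ((dvd_abs _ _).mpr hmd')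
  rw [Int.abs_eq_natAbs] at hple
  omega

lemma exists_big (u : Polynomial ℤ)
    (hinj : ∀ i j : ℕ, 1 ≤ i → i < j → ox u i ≠ ox u j) (R : ℤ) :
    ∃ n, 1 ≤ n ∧ R ≤ |ox u n| := by
  by_contra h
  push_neg at h
  set N := (Finset.Icc (-R) R).card + 1 with hN
  have hmap : ∀ k ∈ Finset.range N, ox u (k+1) ∈ Finset.Icc (-R) R := by
    intro k _
    have h2 := h (k+1) (by omega)
    rw [Finset.mem_Icc]
    constructor
    · linarith [neg_abs_le (ox u (k+1))]
    · linarith [le_abs_self (ox u (k+1))]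
  have hcard : (Finset.Icc (-R) R).card < (Finset.range N).card := by
    rw [Finset.card_range]; omega
  obtain ⟨i, hi, j, hj, hne, heq⟩ := Finset.exists_ne_map_eq_of_card_lt_of_maps_to hcard hmap
  rcases Nat.lt_or_ge i j with hlt | hge
  · exact hinj (i+1) (j+1) (by omega) (by omega) heq
  · exact hinj (j+1) (i+1) (by omega) (by omega) heq.symm

lemma forward_deg2 (u : Polynomial ℤ) (hdeg : 2 ≤ u.natDegree)
    (hL : LocallyNilpotentAt u 0) (hN : ¬ IsNilpotentAt u 0) : False := by
  classical
  by_cases hcol : ∃ i j : ℕ, 1 ≤ i ∧ i < j ∧ ox u i = ox u j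
  · obtain ⟨i, j, h1, hlt, hij⟩ := hcol
    exact no_collision u hL hN h1 hlt hij
  push_neg at hcol
  have hinj : ∀ i j : ℕ, 1 ≤ i → i < j → ox u i ≠ ox u j := hcol
  -- g := u - X
  set g : Polynomial ℤ := u - X with hg
  have hgdeg : 2 ≤ g.natDegree := by
    rw [hg, Polynomial.natDegree_sub_eq_left_of_natDegree_lt]
    · exact hdeg
    · rw [Polynomial.natDegree_X]; omega
  have hgeval : ∀ t : ℤ, g.eval t = u.eval t - t := by
    intro t
    rw [hg]
    simp
  have hstep : ∀ n : ℕ, ox u (n+1) = ox u n + g.eval (ox u n) := by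
    intro n
    rw [ox_succ, hgeval]
    ring
  have hxne : ∀ n : ℕ, 1 ≤ n → ox u n ≠ 0 := fun n hn h => hN ⟨n, hn, h⟩
  -- the difference sequence
  set D : ℕ → ℤ := fun n => ox u (n+1) - ox u n with hD
  have hDg : ∀ n, D n = g.eval (ox u n) := by
    intro n
    rw [hD]
    have := hstep n
    simp only
    linarith
  have hDdvd : ∀ n, D n ∣ D (n+1) := by
    intro n
    have h1 : D n ∣ u.eval (ox u (n+1)) - u.eval (ox u n) :=
      sub_dvd_eval_sub _ _ u
    rw [← ox_succ, ← ox_succ] at h1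
    exact h1
  have hDne : ∀ n, 1 ≤ n → D n ≠ 0 := by
    intro n hn h
    have : ox u (n+1) = ox u n := by
      have : ox u (n+1) - ox u n = 0 := h
      linarith
    exact hinj n (n+1) hn (by omega) this.symm
  -- prime sets
  have hx1 : ox u 1 ≠ 0 := hxne 1 (le_refl _)
  have hx2 : ox u 2 ≠ 0 := hxne 2 (by omega)
  set S : Finset ℕ := (ox u 1 * ox u 2).natAbs.primeFactors with hS
  have hSprime : ∀ p ∈ S, p.Prime := fun p hp => Nat.prime_of_mem_primeFactors hp
  have hmemS : ∀ p : ℕ, p.Prime → ((p:ℤ) ∣ ox u 1 ∨ (p:ℤ) ∣ ox u 2) → p ∈ S := by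
    intro p hp hd
    rw [hS, Nat.mem_primeFactors]
    refine ⟨hp, ?_, ?_⟩
    · rw [← Int.natCast_dvd]
      rcases hd with h | h
      · exact Dvd.dvd.mul_right h _
      · exact Dvd.dvd.mul_left h _
    · simp only [Int.natAbs_ne_zero]
      exact mul_ne_zero hx1 hx2
  obtain ⟨B, hB⟩ := stormer_int S hSprime
  set K : ℤ := 2 * max B 0 + 4 with hK
  obtain ⟨R, hR1, hR⟩ := growth g hgdeg K
  obtain ⟨n₀, hn₀1, hn₀⟩ := exists_big u hinj R
  -- invariant: |x (n₀ + m)| ≥ R for all m, and nondecreasing enough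
  have hinv : ∀ m : ℕ, R ≤ |ox u (n₀ + m)| := by
    intro m
    induction m with
    | zero => simpa using hn₀
    | succ m IH =>
        have hgK : K * |ox u (n₀+m)| ≤ |g.eval (ox u (n₀+m))| := hR _ IH
        have h2 : |ox u (n₀ + m + 1)| ≥ |g.eval (ox u (n₀+m))| - |ox u (n₀+m)| := by
          have h3 := hstep (n₀ + m)
          have h4 : |g.eval (ox u (n₀+m))| = |ox u (n₀+m+1) - ox u (n₀+m)| := by
            rw [h3]; ring_nf
          have h5 := abs_sub_le' (ox u (n₀+m+1)) (ox u (n₀+m))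
          rw [← h4] at h5
          linarith
        have hKpos : (4:ℤ) ≤ K := by
          rw [hK]
          have := le_max_right B 0
          omega
        show R ≤ |ox u (n₀ + (m+1))|
        rw [show n₀ + (m+1) = n₀ + m + 1 by omega]
        nlinarith [abs_nonneg (ox u (n₀+m)), IH]
  -- key quantities at n₀
  have hxR : R ≤ |ox u n₀| := by simpa using hinv 0
  have hxR1 : R ≤ |ox u (n₀+1)| := by
    have := hinv 1
    rwa [show n₀ + 1 = n₀ + 1 by rfl] at this
  -- |x (n₀+1)| ≥ 3 |x n₀| (so ≥ |x n₀|)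
  have hKpos : (4:ℤ) ≤ K := by
    rw [hK]
    have := le_max_right B 0
    omega
  have hmono : |ox u n₀| ≤ |ox u (n₀+1)| := by
    have hgK : K * |ox u n₀| ≤ |g.eval (ox u n₀)| := hR _ hxR
    have h3 := hstep n₀
    have h4 : |g.eval (ox u n₀)| = |ox u (n₀+1) - ox u n₀| := by rw [h3]; ring_nf
    have h5 := abs_sub_le' (ox u (n₀+1)) (ox u n₀)
    rw [← h4] at h5
    nlinarith [abs_nonneg (ox u n₀)]
  -- the ratio A
  obtain ⟨A, hA⟩ := hDdvd n₀
  have hDn0 : D n₀ ≠ 0 := hDne n₀ hn₀1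
  have hDn1 : D (n₀+1) ≠ 0 := hDne (n₀+1) (by omega)
  have hAne : A ≠ 0 := by
    intro h
    rw [h, mul_zero] at hA
    exact hDn1 hA
  have hAne1 : A + 1 ≠ 0 := by
    intro h
    have hA1 : A = -1 := by omega
    rw [hA1] at hA
    have : ox u (n₀+2) = ox u n₀ := by
      have h1 : D (n₀+1) = -(D n₀) := by rw [hA]; ring
      have h2 : ox u (n₀+2) - ox u (n₀+1) = -(ox u (n₀+1) - ox u n₀) := h1
      linarith
    exact hinj n₀ (n₀+2) hn₀1 (by omega) this.symm
  -- smoothness of A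
  have hsmA : ∀ p : ℕ, p.Prime → (p:ℤ) ∣ A → p ∈ S := by
    intro p hp hd
    apply hmemS p hp
    left
    have h1 : (p:ℤ) ∣ D (n₀+1) := by
      rw [hA]
      exact Dvd.dvd.mul_left hd _
    have h2 : (p:ℤ) ∣ ox u ((n₀+1) + 1) - ox u (n₀+1) := h1
    exact collision u hL hp (by omega) h2
  have hsmA1 : ∀ p : ℕ, p.Prime → (p:ℤ) ∣ (A+1) → p ∈ S := by
    intro p hp hd
    apply hmemS p hp
    right
    have h1 : (p:ℤ) ∣ D n₀ * (A + 1) := Dvd.dvd.mul_left hd _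
    have h2 : D n₀ * (A+1) = ox u (n₀ + 2) - ox u n₀ := by
      have : D n₀ * (A+1) = D (n₀+1) + D n₀ := by rw [hA]; ring
      rw [this, hD]
      simp only
      ring_nf
    rw [h2] at h1
    exact collision u hL hp (by omega) h1
  have hAB := hB A hAne hAne1 hsmA hsmA1
  -- size contradiction
  have hD1size : K * |ox u (n₀+1)| ≤ |D (n₀+1)| := by
    rw [hDg]
    exact hR _ hxR1
  have hD0size : |D n₀| ≤ 2 * |ox u (n₀+1)| := by
    rw [hD]
    simp only
    calc |ox u (n₀+1) - ox u n₀| ≤ |ox u (n₀+1)| + |ox u n₀| := abs_sub_le' _ _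
      _ ≤ 2 * |ox u (n₀+1)| := by linarith
  have hAabs : |D (n₀+1)| = |D n₀| * |A| := by rw [hA, abs_mul]
  have hxpos : (1:ℤ) ≤ |ox u (n₀+1)| := by linarith
  have hBmax : |A| ≤ max B 0 := le_trans hAB (le_max_left _ _)
  nlinarith [abs_nonneg (D n₀), abs_nonneg A, abs_nonneg (ox u (n₀+1))]

end SZC

theorem S_zero_classification (u : Polynomial ℤ) (hu : 0 < u.natDegree) :
    (LocallyNilpotentAt u 0 ∧ ¬ IsNilpotentAt u 0) ↔
      ((∃ b : ℤ, b ≠ 0 ∧ u = X + C b) ∨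
       (∃ a b : ℤ, b ≠ 0 ∧ (∃ p : ℕ, Nat.Prime p ∧ (p : ℤ) ∣ a) ∧
          (∀ p : ℕ, Nat.Prime p → (p : ℤ) ∣ a → (p : ℤ) ∣ b) ∧ u = C a * X + C b)) := by
  constructor
  · rintro ⟨hL, hN⟩
    rcases Nat.lt_or_ge u.natDegree 2 with h2 | h2
    · have h1 : u.natDegree = 1 := by omega
      exact SZC.forward_linear u h1 hL hN
    · exact (SZC.forward_deg2 u h2 hL hN).elim
  · rintro (⟨b, hb, rfl⟩ | ⟨a, b, hb, hq, hcond, rfl⟩)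
    · exact SZC.backward1 b hb
    · exact SZC.backward2 a b hb hq hcond
end

section
/- If u ∈ ℤ[X] is nilpotent at 0, i.e. u^{(n)}(0) = 0 for some n ≥ 1, then u^{(2)}(0) = 0; in other words, the nilpotency index of any polynomial nilpotent at 0 is at most 2. -/
open Polynomial

namespace NilpAux

/-- The orbit of `0` under iteration of `u`. -/
def orb (u : Polynomial ℤ) (k : ℕ) : ℤ := (fun x => Polynomial.eval x u)^[k] 0

lemma orb_zero (u : Polynomial ℤ) : orb u 0 = 0 := rfl

lemma orb_succ (u : Polynomial ℤ) (k : ℕ) :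
    orb u (k + 1) = Polynomial.eval (orb u k) u :=
  Function.iterate_succ_apply' _ k 0

lemma orb_add (u : Polynomial ℤ) (j k : ℕ) :
    orb u (j + k) = (fun x => Polynomial.eval x u)^[j] (orb u k) :=
  Function.iterate_add_apply _ j k 0

/-- The consecutive differences of the orbit. -/
def d (u : Polynomial ℤ) (k : ℕ) : ℤ := orb u (k + 1) - orb u k

lemma d_dvd_succ (u : Polynomial ℤ) (k : ℕ) : d u k ∣ d u (k + 1) := by
  have h := Polynomial.sub_dvd_eval_sub (orb u (k + 1)) (orb u k) u
  simpa [d, orb_succ u (k + 1), orb_succ u k] using h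

lemma d_dvd_add (u : Polynomial ℤ) (k j : ℕ) : d u k ∣ d u (k + j) := by
  induction j with
  | zero => simp
  | succ j ih =>
    have := ih.trans (d_dvd_succ u (k + j))
    rwa [Nat.add_assoc] at this

end NilpAux

theorem nilpotency_index_at_zero_le_two (u : Polynomial ℤ) (h : IsNilpotentAt u 0) :
    iterEval u 2 0 = 0 := by
  open NilpAux in
  obtain ⟨n, hn1, hn⟩ := h
  have hxn : orb u n = 0 := hn
  have hper : ∀ k, orb u (k + n) = orb u k := by
    intro k
    rw [orb_add, hxn]
    rfl
  have hdn : d u n = d u 0 := by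
    unfold d
    rw [show n + 1 = 1 + n by ring, hper 1, show n = 0 + n from (Nat.zero_add n).symm,
      hper 0]
  have habs : ∀ k, k ≤ n → (d u k).natAbs = (d u 0).natAbs := by
    intro k hk
    have h1 : d u 0 ∣ d u k := by simpa using d_dvd_add u 0 k
    have h2 : d u k ∣ d u 0 := by
      have := d_dvd_add u k (n - k)
      rwa [Nat.add_sub_cancel' hk, hdn] at this
    exact Nat.dvd_antisymm (Int.natAbs_dvd_natAbs.mpr h2) (Int.natAbs_dvd_natAbs.mpr h1)
  by_cases h0 : orb u 1 = 0
  · have h2 : orb u 2 = 0 := by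
      rw [show (2 : ℕ) = 1 + 1 from rfl, orb_succ, h0]
      have := orb_succ u 0
      rw [orb_zero, h0] at this
      exact this.symm
    exact h2
  · have hd0 : d u 0 ≠ 0 := by
      simpa [d, orb_zero] using h0
    -- there must be a `k` with `orb u (k+2) = orb u k`
    have hex : ∃ k, orb u (k + 2) = orb u k := by
      by_contra hne
      push_neg at hne
      have hall : ∀ k, k < n → d u k = d u 0 := by
        intro k
        induction k with
        | zero => intro _; rfl
        | succ k ih =>
          intro hk
          have ihk := ih (Nat.lt_of_succ_lt hk)
          have habs' := habs (k + 1) (le_of_lt hk)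
          rcases Int.natAbs_eq_natAbs_iff.mp habs' with h1 | h1
          · exact h1
          · exfalso
            apply hne k
            have hneg : d u (k + 1) = -(d u k) := by rw [h1, ihk]
            unfold d at hneg
            have e : k + 1 + 1 = k + 2 := rfl
            rw [e] at hneg
            linarith
      have hsum0 : ∑ k ∈ Finset.range n, d u k = 0 := by
        have := Finset.sum_range_sub (orb u) n
        simp only [d]
        rw [this, hxn, orb_zero, sub_zero]
      have hsum1 : ∑ k ∈ Finset.range n, d u k = (n : ℤ) * d u 0 := by
        rw [Finset.sum_congr rfl fun k hk => hall k (Finset.mem_range.mp hk)]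
        simp [mul_comm]
      rw [hsum1] at hsum0
      rcases mul_eq_zero.mp hsum0 with hc | hc
      · have : n = 0 := by exact_mod_cast hc
        omega
      · exact hd0 hc
    obtain ⟨k, hk⟩ := hex
    have hshift : ∀ j, orb u (k + j + 2) = orb u (k + j) := by
      intro j
      induction j with
      | zero => simpa using hk
      | succ j ih =>
        have e1 : orb u (k + (j + 1) + 2) = Polynomial.eval (orb u (k + j + 2)) u := by
          rw [show k + (j + 1) + 2 = (k + j + 2) + 1 by ring]; exact orb_succ u _
        have e2 : orb u (k + (j + 1)) = Polynomial.eval (orb u (k + j)) u := by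
          rw [show k + (j + 1) = (k + j) + 1 by ring]; exact orb_succ u _
        rw [e1, ih, ← e2]
    obtain ⟨m, rfl⟩ : ∃ m, n = m + 1 := ⟨n - 1, by omega⟩
    have hkn : orb u (k * (m + 1)) = 0 := by
      show (fun x => Polynomial.eval x u)^[k * (m + 1)] 0 = 0
      rw [mul_comm, Function.iterate_mul]
      exact Function.iterate_fixed hxn k
    have hmain : orb u (k * (m + 1) + 2) = orb u (k * (m + 1)) := by
      have := hshift (k * m)
      rwa [show k + k * m = k * (m + 1) by ring] at this
    have h2 : orb u 2 = 0 := by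
      have e : orb u (2 + k * (m + 1)) =
          (fun x => Polynomial.eval x u)^[2] (orb u (k * (m + 1))) := orb_add u 2 _
      rw [hkn] at e
      have e2 : orb u (2 + k * (m + 1)) = orb u 2 := by
        rw [e]; rfl
      rw [← e2, Nat.add_comm, hmain, hkn]
    exact h2
end

section
/- Suppose u ∈ ℤ[X] is nilpotent at 0 with nilpotency index m and u(0) ≠ 0. Setting u₀ := u(0) and uₙ := u^{(n+1)}(0) − u^{(n)}(0) for n ≥ 1, one has uₙ divides uₙ₊₁ for all n ≥ 0, u_m = u₀, hence |uₙ| = |u₀| for all 0 ≤ n ≤ m; moreover u₀ + u₁ + ⋯ + u_{m−1} = 0 and m is even. -/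
open Polynomial

theorem successive_differences_at_zero (u : Polynomial ℤ) (m : ℕ)
    (h : NilpotentOfIndex u 0 m) (h0 : u.eval 0 ≠ 0) :
    (∀ n : ℕ, (iterEval u (n + 1) 0 - iterEval u n 0) ∣
        (iterEval u (n + 2) 0 - iterEval u (n + 1) 0)) ∧
    iterEval u (m + 1) 0 - iterEval u m 0 = u.eval 0 ∧
    (∀ n : ℕ, n ≤ m → |iterEval u (n + 1) 0 - iterEval u n 0| = |u.eval 0|) ∧
    (∑ i ∈ Finset.range m, (iterEval u (i + 1) 0 - iterEval u i 0)) = 0 ∧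
    Even m := by
  obtain ⟨hm1, hm0, hmin⟩ := h
  have hiter : ∀ n, iterEval u (n + 1) 0 = u.eval (iterEval u n 0) := by
    intro n
    simp [iterEval, Function.iterate_succ_apply']
  have hz : iterEval u 0 0 = 0 := rfl
  have h1 : ∀ n : ℕ, (iterEval u (n + 1) 0 - iterEval u n 0) ∣
      (iterEval u (n + 2) 0 - iterEval u (n + 1) 0) := by
    intro n
    rw [show n + 2 = (n + 1) + 1 from rfl, hiter (n + 1), hiter n]
    exact sub_dvd_eval_sub _ _ u
  have hd0 : iterEval u 1 0 - iterEval u 0 0 = u.eval 0 := by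
    rw [hiter 0, hz]; ring
  have h2 : iterEval u (m + 1) 0 - iterEval u m 0 = u.eval 0 := by
    rw [hiter m, hm0]; ring
  have hchain : ∀ a b : ℕ, a ≤ b → (iterEval u (a + 1) 0 - iterEval u a 0) ∣
      (iterEval u (b + 1) 0 - iterEval u b 0) := by
    intro a b hab
    induction b with
    | zero => obtain rfl : a = 0 := Nat.le_zero.mp hab; exact dvd_refl _
    | succ b ih =>
      rcases Nat.lt_or_ge a (b + 1) with h' | h'
      · exact (ih (Nat.lt_succ_iff.mp h')).trans (h1 b)
      · obtain rfl : a = b + 1 := le_antisymm hab h'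
        exact dvd_refl _
  have h3 : ∀ n : ℕ, n ≤ m → |iterEval u (n + 1) 0 - iterEval u n 0| = |u.eval 0| := by
    intro n hn
    have hu : u.eval 0 ∣ iterEval u (n + 1) 0 - iterEval u n 0 := by
      have := hchain 0 n (Nat.zero_le n); rwa [hd0] at this
    have hd : iterEval u (n + 1) 0 - iterEval u n 0 ∣ u.eval 0 := by
      have := hchain n m hn; rwa [h2] at this
    exact Int.dvd_antisymm (abs_nonneg _) (abs_nonneg _)
      (by simpa using hd) (by simpa using hu)
  have h4 : (∑ i ∈ Finset.range m, (iterEval u (i + 1) 0 - iterEval u i 0)) = 0 := by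
    rw [Finset.sum_range_sub (fun i => iterEval u i 0), hm0, hz, sub_zero]
  refine ⟨h1, h2, h3, h4, ?_⟩
  -- parity
  have key : (2 * u.eval 0) ∣ ∑ i ∈ Finset.range m, (u.eval 0 - (iterEval u (i + 1) 0 - iterEval u i 0)) := by
    apply Finset.dvd_sum
    intro i hi
    have hi' := h3 i (le_of_lt (Finset.mem_range.mp hi))
    rcases abs_eq_abs.mp hi' with he | he
    · rw [he]; simp
    · rw [he]; ring_nf; exact ⟨1, by ring⟩
  have hsum : ∑ i ∈ Finset.range m, (u.eval 0 - (iterEval u (i + 1) 0 - iterEval u i 0))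
      = (m : ℤ) * u.eval 0 := by
    rw [Finset.sum_sub_distrib, h4, sub_zero, Finset.sum_const, Finset.card_range,
      nsmul_eq_mul]
  rw [hsum] at key
  obtain ⟨k, hk⟩ := key
  have hmk : (m : ℤ) = 2 * k := by
    have : (m : ℤ) * u.eval 0 = (2 * k) * u.eval 0 := by rw [hk]; ring
    exact mul_right_cancel₀ h0 this
  have : Even (m : ℤ) := ⟨k, by omega⟩
  exact Int.even_coe_nat m |>.mp this
end

section
/- Let u(X) = −2X − 1 ∈ ℤ[X]. Then for every n ≥ 1, u^{(n)}(1) = ((−2)^{n+2} − 1)/3; and for any finite set A of prime numbers, u is weakly locally nilpotent at 1 outside A if and only if 2 ∈ A. (In particular, 3 divides u^{(1)}(1), no iterate u^{(n)}(1) is divisible by 2, and for every prime p ∉ {2,3}, p divides u^{(p−3)}(1).) -/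
open Polynomial

lemma iterEval_formula (n : ℕ) :
    3 * iterEval (C (-2) * X - 1) n 1 = (-2 : ℤ) ^ (n + 2) - 1 := by
  induction n with
  | zero => simp [iterEval]
  | succ n ih =>
    have h : iterEval (C (-2) * X - 1) (n + 1) 1 =
        -2 * iterEval (C (-2) * X - 1) n 1 - 1 := by
      simp [iterEval, Function.iterate_succ_apply']
    rw [h]
    ring_nf
    ring_nf at ih
    linarith [ih]

lemma odd_iter (n : ℕ) : ¬ (2 : ℤ) ∣ iterEval (C (-2) * X - 1) n 1 := by
  intro ⟨k, hk⟩
  have := iterEval_formula n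
  rw [hk] at this
  have h2 : (2 : ℤ) ∣ (-2 : ℤ) ^ (n + 2) := dvd_pow (by norm_num) (by omega)
  obtain ⟨j, hj⟩ := h2
  omega

lemma prime_dvd (p : ℕ) (hp : Nat.Prime p) (h2 : p ≠ 2) (h3 : p ≠ 3) :
    (p : ℤ) ∣ iterEval (C (-2) * X - 1) (p - 3) 1 := by
  have hp5 : 5 ≤ p := by
    have := hp.two_le
    have h4 : p ≠ 4 := fun h => by subst h; exact absurd hp (by decide)
    omega
  have hform := iterEval_formula (p - 3)
  have hexp : p - 3 + 2 = p - 1 := by omega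
  rw [hexp] at hform
  haveI : Fact (Nat.Prime p) := ⟨hp⟩
  have hne : (-2 : ZMod p) ≠ 0 := by
    intro h
    have : ((2 : ℤ) : ZMod p) = 0 := by push_cast at h ⊢; linear_combination -h
    rw [ZMod.intCast_zmod_eq_zero_iff_dvd] at this
    have := Int.le_of_dvd (by norm_num) this
    omega
  have hfermat : ((-2 : ZMod p)) ^ (p - 1) = 1 := ZMod.pow_card_sub_one_eq_one hne
  have hdvd : (p : ℤ) ∣ (-2 : ℤ) ^ (p - 1) - 1 := by
    rw [← ZMod.intCast_zmod_eq_zero_iff_dvd]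
    push_cast
    rw [hfermat]
    ring
  rw [← hform] at hdvd
  have hp3 : ¬ (p : ℤ) ∣ 3 := by
    intro h
    have := Int.le_of_dvd (by norm_num) h
    have h' : p ∣ 3 := by exact_mod_cast h
    omega
  exact ((Nat.prime_iff_prime_int.mp hp).dvd_mul.mp hdvd).resolve_left hp3

theorem neg_two_x_minus_one_analysis :
    (∀ n : ℕ, 1 ≤ n →
      3 * iterEval (C (-2) * X - 1) n 1 = (-2 : ℤ) ^ (n + 2) - 1) ∧
    (∀ A : Set ℕ, A.Finite → (∀ p ∈ A, Nat.Prime p) →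
      (WeaklyLocallyNilpotentAt (C (-2) * X - 1) 1 A ↔ 2 ∈ A)) ∧
    (3 : ℤ) ∣ iterEval (C (-2) * X - 1) 1 1 ∧
    (∀ n : ℕ, 1 ≤ n → ¬ (2 : ℤ) ∣ iterEval (C (-2) * X - 1) n 1) ∧
    (∀ p : ℕ, Nat.Prime p → p ≠ 2 → p ≠ 3 →
      (p : ℤ) ∣ iterEval (C (-2) * X - 1) (p - 3) 1) := by
  refine ⟨fun n _ => iterEval_formula n, fun A _ hA => ?_, ?_, fun n _ => odd_iter n,
    prime_dvd⟩
  · constructor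
    · intro hw
      by_contra h2
      obtain ⟨m, _, hm⟩ := hw 2 Nat.prime_two h2
      exact odd_iter m hm
    · intro h2 p hp hpA
      by_cases hp3 : p = 3
      · exact ⟨1, le_refl 1, by subst hp3; simp [iterEval]⟩
      · have hp2 : p ≠ 2 := fun h => hpA (h ▸ h2)
        refine ⟨p - 3, ?_, prime_dvd p hp hp2 hp3⟩
        have h2' : 2 ≤ p := hp.two_le
        have h4 : p ≠ 4 := fun h => by subst h; exact absurd hp (by decide)
        omega
  · simp [iterEval]
end
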